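/- arXiv:1409.7585 — 7 statements merged into one kernel-verified Lean document; each statement's English description precedes it below -/
import Mathlib

section
/- Let p ∈ (0,∞)ⁿ and let a ∈ ∂E(p) be such that there exist c > 0 and positive integers m₁,…,m_n with p_j·|a_j|^{2p_j} = c·m_j for j = 1,…,n (in particular every a_j ≠ 0). Let B₁,…,B_n be finite Blaschke products, not all constant. Then the map λ ↦ (a₁·B₁(λ),…,a_n·B_n(λ)) maps 𝔻 into E(p) and is an m-geodesic of E(p) for some integer m ≥ 2; indeed the polynomial F(z) := ∏_{j=1}^n (z_j/a_j)^{m_j} is a holomorphic map E(p) → 𝔻 whose composition with this map is a non-constant finite Blaschke product. -/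
open Complex Metric Set Filter

noncomputable section

/-- The open unit disc `𝔻` in `ℂ`. -/
def unitDisc : Set ℂ := Metric.ball (0 : ℂ) 1

/-- The Möbius function `m_α(λ) = (λ - α)/(1 - conj α · λ)`. -/
def mobius (a z : ℂ) : ℂ := (z - a) / (1 - (starRingEnd ℂ) a * z)

/-- `B` agrees on the unit disc with a finite Blaschke product
`ζ · ∏_{j=1}^k m_{α_j}` of degree `k` (here `ζ ∈ 𝕋`, `α_j ∈ 𝔻`). -/
def IsBlaschkeOn (B : ℂ → ℂ) (k : ℕ) : Prop :=
  ∃ (ζ : ℂ) (α : Fin k → ℂ), ‖ζ‖ = 1 ∧ (∀ j, ‖α j‖ < 1) ∧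
    ∀ z ∈ unitDisc, B z = ζ * ∏ j, mobius (α j) z

variable {E : Type*} [NormedAddCommGroup E] [NormedSpace ℂ E]

/-- `f` is a weak `m`-extremal for the nodes `lam` with respect to the domain `D`:
there is no map `h`, holomorphic on an open neighborhood of the closed unit disc
with values in `D`, interpolating `f` at all the nodes. -/
def WeakExtremalFor (D : Set E) (f : ℂ → E) {m : ℕ} (lam : Fin m → ℂ) : Prop :=
  ¬ ∃ (U : Set ℂ) (h : ℂ → E), IsOpen U ∧ Metric.closedBall (0 : ℂ) 1 ⊆ U ∧
      DifferentiableOn ℂ h U ∧ Set.MapsTo h U D ∧ ∀ j, h (lam j) = f (lam j)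

/-- `f` is a weak `m`-extremal of `D`: it is a weak `m`-extremal for some
pairwise distinct nodes in the unit disc. -/
def IsWeakExtremal (D : Set E) (f : ℂ → E) (m : ℕ) : Prop :=
  ∃ lam : Fin m → ℂ, Function.Injective lam ∧ (∀ j, lam j ∈ unitDisc) ∧
    WeakExtremalFor D f lam

/-- `f` is an `m`-extremal of `D`: it is a weak `m`-extremal for every choice of
pairwise distinct nodes in the unit disc. -/
def IsExtremal (D : Set E) (f : ℂ → E) (m : ℕ) : Prop :=
  ∀ lam : Fin m → ℂ, Function.Injective lam → (∀ j, lam j ∈ unitDisc) →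
    WeakExtremalFor D f lam

/-- `f` is an `m`-geodesic of `D`: there is a holomorphic `F : D → 𝔻` such that
`F ∘ f` is a non-constant Blaschke product of degree at most `m - 1`. -/
def IsGeodesic (D : Set E) (f : ℂ → E) (m : ℕ) : Prop :=
  ∃ F : E → ℂ, DifferentiableOn ℂ F D ∧ Set.MapsTo F D unitDisc ∧
    ∃ k : ℕ, 1 ≤ k ∧ k ≤ m - 1 ∧ IsBlaschkeOn (fun z => F (f z)) k

/-- A domain `D ⊆ ℂⁿ` is `k`-balanced (quasi-balanced) if
`(λ^{k₁} z₁, …, λ^{k_n} z_n) ∈ D` for all `λ` in the closed unit disc, `z ∈ D`. -/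
def QuasiBalanced {n : ℕ} (k : Fin n → ℕ) (D : Set (Fin n → ℂ)) : Prop :=
  ∀ l : ℂ, ‖l‖ ≤ 1 → ∀ z ∈ D, (fun j => l ^ k j * z j) ∈ D

/-- The complex ellipsoid `E(p) = {z ∈ ℂⁿ : Σ_j |z_j|^{2 p_j} < 1}`. -/
def ellipsoid {n : ℕ} (p : Fin n → ℝ) : Set (Fin n → ℂ) :=
  {z | ∑ j, ‖z j‖ ^ (2 * p j) < 1}

/-- The Euclidean unit ball `𝔹_n ⊆ ℂⁿ`. -/
def euclideanBall (n : ℕ) : Set (Fin n → ℂ) :=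
  {z | ∑ j, ‖z j‖ ^ 2 < 1}

lemma norm_mobius_lt_one {a z : ℂ} (ha : ‖a‖ < 1) (hz : ‖z‖ < 1) : ‖mobius a z‖ < 1 := by
  have hna : Complex.normSq a < 1 := by
    rw [← Complex.sq_norm]
    exact pow_lt_one₀ (norm_nonneg _) ha two_ne_zero
  have hnz : Complex.normSq z < 1 := by
    rw [← Complex.sq_norm]
    exact pow_lt_one₀ (norm_nonneg _) hz two_ne_zero
  have key : Complex.normSq (z - a) < Complex.normSq (1 - (starRingEnd ℂ) a * z) := by
    have : Complex.normSq (1 - (starRingEnd ℂ) a * z) - Complex.normSq (z - a)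
        = (1 - Complex.normSq a) * (1 - Complex.normSq z) := by
      simp only [Complex.normSq_apply, Complex.sub_re, Complex.sub_im, Complex.mul_re,
        Complex.mul_im, Complex.one_re, Complex.one_im, Complex.conj_re, Complex.conj_im]
      ring
    nlinarith [mul_pos (sub_pos.mpr hna) (sub_pos.mpr hnz)]
  have hd : (1 - (starRingEnd ℂ) a * z) ≠ 0 := by
    intro h
    rw [h, Complex.normSq_zero] at key
    exact absurd key (not_lt.mpr (Complex.normSq_nonneg _))
  rw [mobius, norm_div, div_lt_one (norm_pos_iff.mpr hd)]
  have h1 : ‖z - a‖ = Real.sqrt (Complex.normSq (z - a)) := by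
    rw [Complex.norm_def]
  have h2 : ‖1 - (starRingEnd ℂ) a * z‖ = Real.sqrt (Complex.normSq (1 - (starRingEnd ℂ) a * z)) := by
    rw [Complex.norm_def]
  rw [h1, h2]
  exact Real.sqrt_lt_sqrt (Complex.normSq_nonneg _) key

lemma mem_unitDisc_iff {z : ℂ} : z ∈ unitDisc ↔ ‖z‖ < 1 := by
  simp [unitDisc, Metric.mem_ball, dist_zero_right]

lemma IsBlaschkeOn.norm_le {B : ℂ → ℂ} {k : ℕ} (hB : IsBlaschkeOn B k) {z : ℂ}
    (hz : z ∈ unitDisc) : ‖B z‖ ≤ 1 := by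
  obtain ⟨ζ, α, hζ, hα, hBz⟩ := hB
  rw [hBz z hz, norm_mul, hζ, one_mul, norm_prod]
  exact Finset.prod_le_one (fun j _ => norm_nonneg _)
    (fun j _ => (norm_mobius_lt_one (hα j) (mem_unitDisc_iff.mp hz)).le)

lemma IsBlaschkeOn.norm_lt {B : ℂ → ℂ} {k : ℕ} (hB : IsBlaschkeOn B k) (hk : 1 ≤ k) {z : ℂ}
    (hz : z ∈ unitDisc) : ‖B z‖ < 1 := by
  obtain ⟨ζ, α, hζ, hα, hBz⟩ := hB
  rw [hBz z hz, norm_mul, hζ, one_mul, norm_prod]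
  obtain ⟨k', rfl⟩ : ∃ k', k = k' + 1 := ⟨k - 1, (Nat.succ_pred_eq_of_pos hk).symm⟩
  rw [Fin.prod_univ_succ]
  have h0 : ‖mobius (α 0) z‖ < 1 := norm_mobius_lt_one (hα 0) (mem_unitDisc_iff.mp hz)
  have hrest : ∏ i : Fin k', ‖mobius (α i.succ) z‖ ≤ 1 :=
    Finset.prod_le_one (fun j _ => norm_nonneg _)
      (fun j _ => (norm_mobius_lt_one (hα j.succ) (mem_unitDisc_iff.mp hz)).le)
  have hrest0 : 0 ≤ ∏ i : Fin k', ‖mobius (α i.succ) z‖ :=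
    Finset.prod_nonneg fun j _ => norm_nonneg _
  calc ‖mobius (α 0) z‖ * ∏ i : Fin k', ‖mobius (α i.succ) z‖
      ≤ ‖mobius (α 0) z‖ * 1 := by
        exact mul_le_mul_of_nonneg_left hrest (norm_nonneg _)
    _ < 1 := by rwa [mul_one]

lemma isBlaschkeOn_congr {B B' : ℂ → ℂ} {k : ℕ} (h : ∀ z ∈ unitDisc, B z = B' z)
    (hB : IsBlaschkeOn B k) : IsBlaschkeOn B' k := by
  obtain ⟨ζ, α, hζ, hα, hBz⟩ := hB
  exact ⟨ζ, α, hζ, hα, fun z hz => (h z hz) ▸ hBz z hz⟩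

lemma isBlaschkeOn_mul {B1 B2 : ℂ → ℂ} {k1 k2 : ℕ} (h1 : IsBlaschkeOn B1 k1)
    (h2 : IsBlaschkeOn B2 k2) : IsBlaschkeOn (fun z => B1 z * B2 z) (k1 + k2) := by
  obtain ⟨ζ1, α1, hζ1, hα1, hB1⟩ := h1
  obtain ⟨ζ2, α2, hζ2, hα2, hB2⟩ := h2
  refine ⟨ζ1 * ζ2, Fin.append α1 α2, by rw [norm_mul, hζ1, hζ2, one_mul], ?_, ?_⟩
  · intro j
    refine Fin.addCases (fun i => ?_) (fun i => ?_) j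
    · rw [Fin.append_left]; exact hα1 i
    · rw [Fin.append_right]; exact hα2 i
  · intro z hz
    show B1 z * B2 z = _
    rw [hB1 z hz, hB2 z hz, Fin.prod_univ_add]
    simp only [Fin.append_left, Fin.append_right]
    ring

lemma isBlaschkeOn_pow {B : ℂ → ℂ} {k : ℕ} (h : IsBlaschkeOn B k) (m : ℕ) :
    IsBlaschkeOn (fun z => B z ^ m) (m * k) := by
  induction m with
  | zero =>
    rw [Nat.zero_mul]
    exact ⟨1, Fin.elim0, by simp, fun j => j.elim0, fun z _ => by simp⟩
  | succ m ih =>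
    have := isBlaschkeOn_mul ih h
    have heq : ∀ z ∈ unitDisc, B z ^ m * B z = B z ^ (m + 1) := fun z _ => (pow_succ _ _).symm
    have : IsBlaschkeOn (fun z => B z ^ (m + 1)) (m * k + k) := isBlaschkeOn_congr heq this
    rwa [show (m + 1) * k = m * k + k by ring]

lemma isBlaschkeOn_prod {ι : Type*} (s : Finset ι) (B : ι → ℂ → ℂ) (k : ι → ℕ)
    (h : ∀ j ∈ s, IsBlaschkeOn (B j) (k j)) :
    IsBlaschkeOn (fun z => ∏ j ∈ s, B j z) (∑ j ∈ s, k j) := by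
  classical
  induction s using Finset.induction_on with
  | empty => exact ⟨1, Fin.elim0, by simp, fun j => j.elim0, fun z _ => by
      simp; exact (Finset.prod_eq_one (fun j _ => j.elim0)).symm⟩
  | insert _ _ hns ih =>
    rename_i a s'
    rw [Finset.sum_insert hns]
    have hmul := isBlaschkeOn_mul (h a (Finset.mem_insert_self a s'))
      (ih (fun j hj => h j (Finset.mem_insert_of_mem hj)))
    exact isBlaschkeOn_congr
      (fun z _ => (Finset.prod_insert hns).symm) hmul

lemma diff_finset_prod {E : Type*} [NormedAddCommGroup E] [NormedSpace ℂ E]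
    {ι : Type*} (s : Finset ι) (g : ι → E → ℂ)
    (h : ∀ j ∈ s, Differentiable ℂ (g j)) :
    Differentiable ℂ (fun z => ∏ j ∈ s, g j z) := by
  classical
  induction s using Finset.induction_on with
  | empty => simp only [Finset.prod_empty]; exact differentiable_const (1 : ℂ)
  | insert _ _ hns ih =>
    rename_i a s'
    simp only [Finset.prod_insert hns]
    exact (h a (Finset.mem_insert_self a s')).mul
      (ih (fun j hj => h j (Finset.mem_insert_of_mem hj)))

/-- Let `a ∈ ∂E(p)` satisfy `p_j |a_j|^{2p_j} = c m_j` with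
`c > 0` and `m_j ∈ ℕ`, and let `B₁, …, B_n` be finite Blaschke products, not all
constant. Then `λ ↦ (a₁ B₁(λ), …, a_n B_n(λ))` maps `𝔻` into `E(p)` and is an
`m`-geodesic of `E(p)` for some `m ≥ 2`; indeed `F(z) = ∏_j (z_j/a_j)^{m_j}` is a
holomorphic map `E(p) → 𝔻` whose composition with it is a non-constant finite
Blaschke product. -/
theorem blaschke_coordinates_are_geodesics
    {n : ℕ} (p : Fin n → ℝ) (hp : ∀ j, 0 < p j)
    (a : Fin n → ℂ) (ha : ∑ j, ‖a j‖ ^ (2 * p j) = 1)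
    (c : ℝ) (hc : 0 < c) (mv : Fin n → ℕ) (hmv : ∀ j, 1 ≤ mv j)
    (hpa : ∀ j, p j * ‖a j‖ ^ (2 * p j) = c * (mv j : ℝ))
    (B : Fin n → ℂ → ℂ) (hB : ∀ j, ∃ k : ℕ, IsBlaschkeOn (B j) k)
    (hBnc : ∃ j, ∃ z ∈ unitDisc, ∃ w ∈ unitDisc, B j z ≠ B j w)
    (f : ℂ → Fin n → ℂ) (hf : f = fun z j => a j * B j z)
    (F : (Fin n → ℂ) → ℂ) (hF : F = fun z => ∏ j, (z j / a j) ^ (mv j)) :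
    Set.MapsTo f unitDisc (ellipsoid p) ∧
    (∃ m : ℕ, 2 ≤ m ∧ IsGeodesic (ellipsoid p) f m) ∧
    DifferentiableOn ℂ F (ellipsoid p) ∧
    Set.MapsTo F (ellipsoid p) unitDisc ∧
    (∃ k : ℕ, 1 ≤ k ∧ IsBlaschkeOn (fun z => F (f z)) k) := by
  classical
  choose k hk using hB
  -- each `a j` is nonzero
  have ha_ne : ∀ j, a j ≠ 0 := by
    intro j h0
    have := hpa j
    rw [h0, norm_zero, Real.zero_rpow (by have := hp j; positivity), mul_zero] at this
    have : (0 : ℝ) < c * (mv j : ℝ) := by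
      have : (1 : ℝ) ≤ (mv j : ℝ) := by exact_mod_cast hmv j
      nlinarith
    linarith
  set s : Fin n → ℝ := fun j => ‖a j‖ ^ (2 * p j) with hs
  have hs_pos : ∀ j, 0 < s j := by
    intro j
    have : 0 < ‖a j‖ := norm_pos_iff.mpr (ha_ne j)
    exact Real.rpow_pos_of_pos this _
  -- the non-constant coordinate
  obtain ⟨j0, z0, hz0, w0, hw0, hne⟩ := hBnc
  have hk0 : 1 ≤ k j0 := by
    by_contra h
    have hk00 : k j0 = 0 := by omega
    obtain ⟨ζ, α, hζ, hα, hBz⟩ := hk00 ▸ hk j0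
    have e1 := hBz z0 hz0
    have e2 := hBz w0 hw0
    simp only [Finset.univ_eq_empty, Finset.prod_empty, mul_one] at e1 e2
    exact hne (e1.trans e2.symm)
  -- Part 1: f maps the disc into the ellipsoid
  have part1 : Set.MapsTo f unitDisc (ellipsoid p) := by
    intro z hz
    rw [hf]
    simp only [ellipsoid, Set.mem_setOf_eq]
    have hterm : ∀ j, ‖a j * B j z‖ ^ (2 * p j) = s j * ‖B j z‖ ^ (2 * p j) := by
      intro j
      rw [norm_mul, Real.mul_rpow (norm_nonneg _) (norm_nonneg _)]
    calc ∑ j, ‖a j * B j z‖ ^ (2 * p j)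
        < ∑ j, s j := by
          refine Finset.sum_lt_sum (fun j _ => ?_) ⟨j0, Finset.mem_univ j0, ?_⟩
          · rw [hterm j]
            have h1 : ‖B j z‖ ^ (2 * p j) ≤ 1 :=
              Real.rpow_le_one (norm_nonneg _) ((hk j).norm_le hz)
                (by have := hp j; positivity)
            nlinarith [hs_pos j]
          · rw [hterm j0]
            have h1 : ‖B j0 z‖ ^ (2 * p j0) < 1 := by
              rcases eq_or_ne (‖B j0 z‖) 0 with h0 | h0
              · rw [h0, Real.zero_rpow (by have := hp j0; positivity)]; norm_num
              · exact Real.rpow_lt_one (norm_nonneg _) ((hk j0).norm_lt hk0 hz)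
                  (by have := hp j0; positivity)
            nlinarith [hs_pos j0]
      _ = 1 := ha
  -- F ∘ f is a Blaschke product of degree K
  have hFf : ∀ z, F (f z) = ∏ j, (B j z) ^ (mv j) := by
    intro z
    rw [hF, hf]
    exact Finset.prod_congr rfl fun j _ => by
      rw [mul_div_cancel_left₀ _ (ha_ne j)]
  set K : ℕ := ∑ j, mv j * k j with hK
  have hK1 : 1 ≤ K := by
    calc 1 = 1 * 1 := (one_mul 1).symm
      _ ≤ mv j0 * k j0 := Nat.mul_le_mul (hmv j0) hk0
      _ ≤ K := Finset.single_le_sum (f := fun j => mv j * k j)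
          (fun i _ => Nat.zero_le _) (Finset.mem_univ j0)
  have hKB : IsBlaschkeOn (fun z => F (f z)) K := by
    have hprod : IsBlaschkeOn (fun z => ∏ j, (B j z) ^ (mv j)) K :=
      isBlaschkeOn_prod Finset.univ (fun j z => (B j z) ^ (mv j)) (fun j => mv j * k j)
        (fun j _ => isBlaschkeOn_pow (hk j) (mv j))
    exact isBlaschkeOn_congr (fun z _ => (hFf z).symm) hprod
  -- F is entire
  have hFd : DifferentiableOn ℂ F (ellipsoid p) := by
    rw [hF]
    have hproj : ∀ j : Fin n, Differentiable ℂ (fun z : Fin n → ℂ => z j) := by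
      intro j
      exact (ContinuousLinearMap.proj j : (Fin n → ℂ) →L[ℂ] ℂ).differentiable
    have : Differentiable ℂ (fun z : Fin n → ℂ => ∏ j, (z j / a j) ^ (mv j)) := by
      apply diff_finset_prod
      intro j _
      have h1 : Differentiable ℂ (fun z : Fin n → ℂ => z j * (a j)⁻¹) :=
        (hproj j).mul_const _
      have h2 : Differentiable ℂ (fun z : Fin n → ℂ => (z j * (a j)⁻¹) ^ mv j) := by fun_prop
      simpa [div_eq_mul_inv] using h2
    exact this.differentiableOn
  -- F maps the ellipsoid into the disc
  have hFm : Set.MapsTo F (ellipsoid p) unitDisc := by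
    intro z hz
    simp only [ellipsoid, Set.mem_setOf_eq] at hz
    rw [mem_unitDisc_iff]
    set t : Fin n → ℝ := fun j => ‖z j‖ ^ (2 * p j) with ht
    have ht_nonneg : ∀ j, 0 ≤ t j := fun j => Real.rpow_nonneg (norm_nonneg _) _
    have hnorm : ‖F z‖ = ∏ j, ‖z j / a j‖ ^ (mv j) := by
      rw [hF]; push_cast
      rw [norm_prod]
      exact Finset.prod_congr rfl fun j _ => by rw [norm_pow]
    have hrp : ‖F z‖ ^ (2 * c) = ∏ j, (t j / s j) ^ (s j) := by
      rw [hnorm, ← Real.finset_prod_rpow _ _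
        (fun j _ => pow_nonneg (norm_nonneg _) _)]
      refine Finset.prod_congr rfl fun j _ => ?_
      have hx : (0 : ℝ) ≤ ‖z j / a j‖ := norm_nonneg _
      have e1 : ‖z j / a j‖ ^ (mv j) = ‖z j / a j‖ ^ ((mv j : ℝ)) :=
        (Real.rpow_natCast _ _).symm
      rw [e1, ← Real.rpow_mul hx]
      have e2 : (mv j : ℝ) * (2 * c) = (2 * p j) * s j := by
        have := hpa j
        have : c * (mv j : ℝ) = p j * s j := this.symm
        nlinarith
      rw [e2, Real.rpow_mul hx]
      congr 1
      rw [norm_div, Real.div_rpow (norm_nonneg _) (norm_nonneg _)]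
    have hgm : ∏ j, (t j / s j) ^ (s j) ≤ ∑ j, t j := by
      have := Real.geom_mean_le_arith_mean_weighted Finset.univ s (fun j => t j / s j)
        (fun j _ => (hs_pos j).le) ha
        (fun j _ => div_nonneg (ht_nonneg j) (hs_pos j).le)
      calc ∏ j, (t j / s j) ^ (s j) ≤ ∑ j, s j * (t j / s j) := this
        _ = ∑ j, t j := Finset.sum_congr rfl fun j _ => by
            rw [mul_comm, div_mul_cancel₀ _ (hs_pos j).ne']
    have hlt : ‖F z‖ ^ (2 * c) < 1 := by
      rw [hrp]; exact lt_of_le_of_lt hgm hz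
    exact (Real.rpow_lt_one_iff' (norm_nonneg _) (by linarith)).mp hlt
  refine ⟨part1, ⟨K + 1, by omega, F, hFd, hFm, K, hK1, by omega, hKB⟩,
    hFd, hFm, K, hK1, hKB⟩
end
end

section
/- Let p ∈ (0,∞)ⁿ, let a ∈ ∂E(p), let m₁,…,m_n be positive integers with least common multiple m, and assume 2·p_j·m_j ≥ m for j = 1,…,n. Then the map λ ↦ (a₁·λ^{m₁},…,a_n·λ^{m_n}) maps 𝔻 into E(p) and is an (m+1)-geodesic of E(p). -/
open Complex Metric Set Filter

noncomputable section

variable {E : Type*} [NormedAddCommGroup E] [NormedSpace ℂ E]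

/-- Let `a ∈ ∂E(p)`, let `m₁, …, m_n` be positive integers with
least common multiple `M`, and assume `2 p_j m_j ≥ M` for all `j`. Then
`λ ↦ (a₁ λ^{m₁}, …, a_n λ^{m_n})` maps `𝔻` into `E(p)` and is an
`(M+1)`-geodesic of `E(p)`. -/
theorem monomial_map_is_geodesic
    {n : ℕ} (p : Fin n → ℝ) (hp : ∀ j, 0 < p j)
    (a : Fin n → ℂ) (ha : ∑ j, ‖a j‖ ^ (2 * p j) = 1)
    (mv : Fin n → ℕ) (hmv : ∀ j, 1 ≤ mv j)
    (M : ℕ) (hM : M = Finset.univ.lcm mv)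
    (hMp : ∀ j, (M : ℝ) ≤ 2 * p j * (mv j : ℝ))
    (f : ℂ → Fin n → ℂ) (hf : f = fun z j => a j * z ^ (mv j)) :
    Set.MapsTo f unitDisc (ellipsoid p) ∧ IsGeodesic (ellipsoid p) f (M + 1) := by
  subst hf
  -- M is positive
  have hM0 : M ≠ 0 := by
    rw [hM]
    intro h
    rw [Finset.lcm_eq_zero_iff] at h
    obtain ⟨j, -, hj⟩ := h
    have := hmv j; omega
  -- the exponents q j = M / mv j
  obtain ⟨q, hqdef⟩ : ∃ q : Fin n → ℕ, q = fun j => M / mv j := ⟨_, rfl⟩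
  have hq : ∀ j, mv j * q j = M := by
    intro j
    rw [hqdef]
    exact Nat.mul_div_cancel' (hM ▸ Finset.dvd_lcm (Finset.mem_univ j))
  have hq1 : ∀ j, 1 ≤ q j := fun j =>
    Nat.pos_of_ne_zero fun h0 => hM0 (by simpa [h0] using (hq j).symm)
  have hp2 : ∀ j, (0:ℝ) < 2 * p j := fun j => by have := hp j; linarith
  -- the weights
  obtain ⟨w, hwdef⟩ : ∃ w : Fin n → ℝ, w = fun j => ‖a j‖ ^ (2 * p j) := ⟨_, rfl⟩
  have haw : ∑ j, w j = 1 := by simp only [hwdef]; exact ha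
  have hw0 : ∀ j, 0 ≤ w j := fun j => by
    simp only [hwdef]; exact Real.rpow_nonneg (norm_nonneg _) _
  obtain ⟨t, htdef⟩ : ∃ t : Fin n → ℝ, t = fun j => (q j : ℝ) / (2 * p j) := ⟨_, rfl⟩
  have ht0 : ∀ j, 0 < t j := fun j => by
    simp only [htdef]
    exact div_pos (by exact_mod_cast hq1 j) (hp2 j)
  have hqle : ∀ j, (q j : ℝ) ≤ 2 * p j := by
    intro j
    have h1 : (mv j : ℝ) * (q j : ℝ) = (M : ℝ) := by exact_mod_cast hq j
    have h2 := hMp j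
    have hmj : (0:ℝ) < (mv j : ℝ) := by exact_mod_cast hmv j
    nlinarith
  have ht1 : ∀ j, t j ≤ 1 := fun j => by
    simp only [htdef]
    exact (div_le_one (hp2 j)).2 (hqle j)
  have h2pt : ∀ j, 2 * p j * t j = (q j : ℝ) := by
    intro j
    simp only [htdef]
    rw [mul_comm]
    exact div_mul_cancel₀ _ (ne_of_gt (hp2 j))
  -- the normalizing constant
  obtain ⟨C, hCdef⟩ : ∃ C : ℝ, C = ∑ j, w j / t j := ⟨_, rfl⟩
  have hC1 : (1:ℝ) ≤ C := by
    rw [hCdef, ← haw]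
    refine Finset.sum_le_sum fun j _ => ?_
    rw [le_div_iff₀ (ht0 j)]
    nlinarith [hw0 j, ht1 j, ht0 j]
  have hC0 : (0:ℝ) < C := lt_of_lt_of_le one_pos hC1
  have htC0 : ∀ j, (0:ℝ) < t j * C := fun j => mul_pos (ht0 j) hC0
  -- the coefficients
  obtain ⟨c, hcdef⟩ : ∃ c : Fin n → ℂ, c = fun j =>
      (starRingEnd ℂ (a j)) ^ (q j) * ((‖a j‖ ^ (2 * p j - 2 * (q j : ℝ)) : ℝ) : ℂ) /
        (((t j * C : ℝ)) : ℂ) := ⟨_, rfl⟩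
  -- Key identity: c j * a j ^ q j = w j / (t j * C)
  have key1 : ∀ j, c j * (a j) ^ (q j) = ((w j / (t j * C) : ℝ) : ℂ) := by
    intro j
    by_cases haj : a j = 0
    · have hwz : w j = 0 := by
        simp [hwdef, haj, Real.zero_rpow (ne_of_gt (hp2 j))]
      simp [hcdef, haj, zero_pow (by have := hq1 j; omega : q j ≠ 0), hwz]
    · have hA : (0:ℝ) < ‖a j‖ := norm_pos_iff.2 haj
      have h1 : (starRingEnd ℂ (a j)) ^ (q j) * (a j) ^ (q j)
          = ((‖a j‖ ^ (2 * (q j : ℝ)) : ℝ) : ℂ) := by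
        rw [← mul_pow]
        have hconj : (starRingEnd ℂ) (a j) * a j = ((‖a j‖ ^ (2:ℕ) : ℝ) : ℂ) := by
          rw [mul_comm, Complex.mul_conj]
          norm_cast
          rw [Complex.normSq_eq_norm_sq]
        rw [hconj, ← Complex.ofReal_pow, ← pow_mul, ← Real.rpow_natCast ‖a j‖ (2 * q j)]
        push_cast
        ring_nf
      have h2 : ‖a j‖ ^ (2 * (q j : ℝ)) * ‖a j‖ ^ (2 * p j - 2 * (q j : ℝ)) = w j := by
        rw [← Real.rpow_add hA, hwdef]
        norm_num
      calc c j * (a j) ^ (q j)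
          = ((starRingEnd ℂ (a j)) ^ (q j) * (a j) ^ (q j)) *
              ((‖a j‖ ^ (2 * p j - 2 * (q j : ℝ)) : ℝ) : ℂ) / (((t j * C : ℝ)) : ℂ) := by
            simp only [hcdef]; ring
        _ = ((‖a j‖ ^ (2 * (q j : ℝ)) * ‖a j‖ ^ (2 * p j - 2 * (q j : ℝ)) : ℝ) : ℂ) /
              (((t j * C : ℝ)) : ℂ) := by rw [h1]; push_cast; ring
        _ = ((w j / (t j * C) : ℝ) : ℂ) := by rw [h2, Complex.ofReal_div]
  -- Key estimate
  have key2 : ∀ (j : Fin n) (z : ℂ),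
      ‖c j * z ^ (q j)‖ ≤ ((1 - t j) * (w j / t j) + ‖z‖ ^ (2 * p j)) / C := by
    intro j z
    have hx0 : (0:ℝ) ≤ ‖z‖ ^ (2 * p j) := Real.rpow_nonneg (norm_nonneg _) _
    have hRHS0 : (0:ℝ) ≤ ((1 - t j) * (w j / t j) + ‖z‖ ^ (2 * p j)) / C :=
      div_nonneg (add_nonneg (mul_nonneg (by linarith [ht1 j])
        (div_nonneg (hw0 j) (ht0 j).le)) hx0) hC0.le
    by_cases haj : a j = 0
    · have hc0 : c j = 0 := by
        simp [hcdef, haj, zero_pow (by have := hq1 j; omega : q j ≠ 0)]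
      simpa [hc0] using hRHS0
    · have hA : (0:ℝ) < ‖a j‖ := norm_pos_iff.2 haj
      have hnc : ‖c j * z ^ (q j)‖
          = ‖a j‖ ^ (2 * p j - (q j : ℝ)) * ‖z‖ ^ ((q j : ℝ)) / (t j * C) := by
        simp only [hcdef, norm_mul, norm_div, norm_pow, RCLike.norm_conj, Complex.norm_real]
        rw [Real.norm_of_nonneg (Real.rpow_nonneg (norm_nonneg (a j)) _),
          Real.norm_of_nonneg (ht0 j).le, Real.norm_of_nonneg hC0.le,
          ← Real.rpow_natCast ‖a j‖ (q j), ← Real.rpow_natCast ‖z‖ (q j),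
          ← Real.rpow_add hA,
          show (q j : ℝ) + (2 * p j - 2 * (q j : ℝ)) = 2 * p j - (q j : ℝ) by ring]
        ring
      have e1 : ‖a j‖ ^ (2 * p j - (q j : ℝ)) = (w j) ^ (1 - t j) := by
        simp only [hwdef]
        rw [← Real.rpow_mul (norm_nonneg (a j))]
        congr 1
        linear_combination h2pt j
      have e2 : ‖z‖ ^ ((q j : ℝ)) = (‖z‖ ^ (2 * p j)) ^ (t j) := by
        rw [← Real.rpow_mul (norm_nonneg z), h2pt j]
      have hgm : ‖a j‖ ^ (2 * p j - (q j : ℝ)) * ‖z‖ ^ ((q j : ℝ))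
          ≤ (1 - t j) * w j + t j * (‖z‖ ^ (2 * p j)) := by
        rw [e1, e2]
        exact Real.geom_mean_le_arith_mean2_weighted (by linarith [ht1 j]) (ht0 j).le
          (hw0 j) hx0 (by ring)
      have heq : ((1 - t j) * w j + t j * (‖z‖ ^ (2 * p j))) / (t j * C)
          = ((1 - t j) * (w j / t j) + ‖z‖ ^ (2 * p j)) / C := by
        have hwt' : w j / t j * t j = w j := div_mul_cancel₀ _ (ht0 j).ne'
        rw [div_eq_div_iff (htC0 j).ne' hC0.ne']
        linear_combination (- (1 - t j) * C) * hwt'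
      calc ‖c j * z ^ (q j)‖
          = ‖a j‖ ^ (2 * p j - (q j : ℝ)) * ‖z‖ ^ ((q j : ℝ)) / (t j * C) := hnc
        _ ≤ ((1 - t j) * w j + t j * (‖z‖ ^ (2 * p j))) / (t j * C) :=
            (div_le_div_iff_of_pos_right (htC0 j)).2 hgm
        _ = _ := heq
  -- sum of the coefficients is 1
  have hr : ∑ j, w j / (t j * C) = 1 := by
    have h1 : ∀ j, w j / (t j * C) = (w j / t j) / C := fun j => by rw [div_div]
    rw [Finset.sum_congr rfl fun j _ => h1 j, ← Finset.sum_div, ← hCdef, div_self hC0.ne']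
  have hsumc : ∑ j, c j * (a j) ^ (q j) = 1 := by
    rw [Finset.sum_congr rfl fun j _ => key1 j, ← Complex.ofReal_sum, hr, Complex.ofReal_one]
  -- F ∘ f = λ ^ M
  have hFf : ∀ z : ℂ, ∑ j, c j * (a j * z ^ (mv j)) ^ (q j) = z ^ M := by
    intro z
    have h1 : ∀ j, c j * (a j * z ^ (mv j)) ^ (q j) = (c j * (a j) ^ (q j)) * z ^ M := by
      intro j
      rw [mul_pow, ← pow_mul, hq j]
      ring
    rw [Finset.sum_congr rfl fun j _ => h1 j, ← Finset.sum_mul, hsumc, one_mul]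
  -- F maps the ellipsoid into the unit disc
  have hsum1 : ∑ j, (1 - t j) * (w j / t j) = C - 1 := by
    have h1 : ∀ j, (1 - t j) * (w j / t j) = w j / t j - w j := by
      intro j
      have hwt' : w j / t j * t j = w j := div_mul_cancel₀ _ (ht0 j).ne'
      linear_combination - hwt'
    rw [Finset.sum_congr rfl fun j _ => h1 j, Finset.sum_sub_distrib, haw, hCdef]
  have hFmaps : ∀ z ∈ ellipsoid p, ‖∑ j, c j * (z j) ^ (q j)‖ < 1 := by
    intro z hz
    have hz' : ∑ j, ‖z j‖ ^ (2 * p j) < 1 := hz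
    calc ‖∑ j, c j * (z j) ^ (q j)‖
        ≤ ∑ j, ‖c j * (z j) ^ (q j)‖ := norm_sum_le _ _
      _ ≤ ∑ j, ((1 - t j) * (w j / t j) + ‖z j‖ ^ (2 * p j)) / C :=
          Finset.sum_le_sum fun j _ => key2 j (z j)
      _ = ((C - 1) + ∑ j, ‖z j‖ ^ (2 * p j)) / C := by
          rw [← Finset.sum_div, Finset.sum_add_distrib, hsum1]
      _ < ((C - 1) + 1) / C := by
          exact (div_lt_div_iff_of_pos_right hC0).2 (by linarith)
      _ = 1 := by field_simp; ring
  constructor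
  · -- f maps the disc into the ellipsoid
    intro z hz
    have hz1 : ‖z‖ < 1 := by simpa [unitDisc] using hz
    show ∑ j, ‖a j * z ^ (mv j)‖ ^ (2 * p j) < 1
    have hterm : ∀ j, ‖a j * z ^ (mv j)‖ ^ (2 * p j) ≤ w j * ‖z‖ ^ (M : ℝ) := by
      intro j
      rw [norm_mul, norm_pow,
        Real.mul_rpow (norm_nonneg _) (pow_nonneg (norm_nonneg _) _)]
      rw [hwdef]
      apply mul_le_mul_of_nonneg_left _ (Real.rpow_nonneg (norm_nonneg _) _)
      rw [← Real.rpow_natCast ‖z‖ (mv j), ← Real.rpow_mul (norm_nonneg z)]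
      apply Real.rpow_le_rpow_of_exponent_ge' (norm_nonneg z) hz1.le (by positivity)
      calc (M : ℝ) ≤ 2 * p j * (mv j : ℝ) := hMp j
        _ = (mv j : ℝ) * (2 * p j) := by ring
    calc ∑ j, ‖a j * z ^ (mv j)‖ ^ (2 * p j)
        ≤ ∑ j, w j * ‖z‖ ^ (M : ℝ) := Finset.sum_le_sum fun j _ => hterm j
      _ = ‖z‖ ^ (M : ℝ) := by rw [← Finset.sum_mul, haw, one_mul]
      _ < 1 := Real.rpow_lt_one (norm_nonneg z) hz1
          (by exact_mod_cast Nat.pos_of_ne_zero hM0)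
  · -- the geodesic property
    refine ⟨fun z => ∑ j, c j * (z j) ^ (q j), ?_, ?_, M,
      Nat.one_le_iff_ne_zero.2 hM0, by omega, ?_⟩
    · apply Differentiable.differentiableOn
      apply Differentiable.fun_sum
      intro j _
      exact ((ContinuousLinearMap.proj j :
        (Fin n → ℂ) →L[ℂ] ℂ).differentiable.pow (q j)).const_mul (c j)
    · intro z hz
      simp only [unitDisc, Metric.mem_ball, dist_zero_right]
      exact hFmaps z hz
    · refine ⟨1, fun _ => (0:ℂ), by simp, fun j => by simp, ?_⟩
      intro z hz
      show ∑ j, c j * ((a j * z ^ (mv j))) ^ (q j) = 1 * ∏ _j : Fin M, mobius 0 z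
      rw [hFf z]
      simp [mobius, Finset.prod_const]
end
end

section
/- Let m ≥ 3 be an integer, let 0 < b ≤ 1/(m−1) and put a := √(1−b²). Then the map f(λ) := (a·λ, b·λ^m) maps 𝔻 into the Euclidean unit ball 𝔹₂ ⊆ ℂ² and is an (m+1)-geodesic of 𝔹₂. -/
open Complex Metric Set Filter

noncomputable section

variable {E : Type*} [NormedAddCommGroup E] [NormedSpace ℂ E]

-- ===== auxiliary lemmas =====

section Aux

lemma pow_sub_pow_le_ineq (n : ℕ) {x y : ℝ} (hx : 0 ≤ x) (hxy : x ≤ y) :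
    y^(n+1) - x^(n+1) ≤ (n+1) * y^n * (y - x) := by
  induction n with
  | zero => simp
  | succ k ih =>
    have hy : 0 ≤ y := hx.trans hxy
    have hp : x^(k+1) ≤ y^(k+1) := pow_le_pow_left₀ hx hxy _
    have h1 : y^(k+2) - x^(k+2) = y*(y^(k+1) - x^(k+1)) + x^(k+1)*(y-x) := by ring
    have h2 : y*(y^(k+1) - x^(k+1)) ≤ y*((k+1) * y^k * (y - x)) :=
      mul_le_mul_of_nonneg_left ih hy
    have h3 : x^(k+1)*(y-x) ≤ y^(k+1)*(y-x) :=
      mul_le_mul_of_nonneg_right hp (by linarith)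
    have h4 : y*((k+1) * y^k * (y - x)) + y^(k+1)*(y-x) = (k+2) * y^(k+1) * (y-x) := by
      push_cast; ring
    push_cast
    push_cast at h4
    nlinarith [h1, h2, h3, h4]

lemma le_pow_sub_pow_ineq (n : ℕ) {x y : ℝ} (hx : 0 ≤ x) (hxy : x ≤ y) :
    (n+1) * x^n * (y - x) ≤ y^(n+1) - x^(n+1) := by
  induction n with
  | zero => simp
  | succ k ih =>
    have hy : 0 ≤ y := hx.trans hxy
    have hp : x^(k+1) ≤ y^(k+1) := pow_le_pow_left₀ hx hxy _
    have hxk : (0:ℝ) ≤ x^(k+1) := pow_nonneg hx _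
    have h1 : y^(k+2) - x^(k+2) = y*(y^(k+1) - x^(k+1)) + x^(k+1)*(y-x) := by ring
    have h2 : x*((k+1) * x^k * (y - x)) ≤ y*(y^(k+1) - x^(k+1)) := by
      calc x*((k+1) * x^k * (y - x)) ≤ x*(y^(k+1) - x^(k+1)) :=
            mul_le_mul_of_nonneg_left ih hx
        _ ≤ y*(y^(k+1) - x^(k+1)) := mul_le_mul_of_nonneg_right hxy (by linarith)
    have h4 : x*((k+1) * x^k * (y - x)) + x^(k+1)*(y-x) = (k+2) * x^(k+1) * (y-x) := by
      push_cast; ring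
    push_cast
    push_cast at h4
    nlinarith [h1, h2, h4]

lemma mono_part (k : ℕ) {u v : ℝ} (h0 : 0 ≤ u) (huv : u ≤ v) (hv : ((k:ℝ)+2) * v ≤ 1) :
    u * (1-u)^(k+1) ≤ v * (1-v)^(k+1) := by
  have hv1 : v ≤ 1 := by nlinarith
  have hx : (0:ℝ) ≤ 1 - v := by linarith
  have hxy : (1:ℝ) - v ≤ 1 - u := by linarith
  have hyk : (0:ℝ) ≤ (1-u)^k := pow_nonneg (by linarith) _
  have key : v*(1-v)^(k+1) - u*(1-u)^(k+1)
      = v*((1-v)^(k+1) - (1-u)^(k+1)) + (v-u)*(1-u)^(k+1) := by ring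
  have h2 : v*((1-u)^(k+1) - (1-v)^(k+1)) ≤ v*(((k:ℝ)+1) * (1-u)^k * (v-u)) := by
    apply mul_le_mul_of_nonneg_left _ (h0.trans huv)
    calc (1-u)^(k+1) - (1-v)^(k+1) ≤ ((k:ℝ)+1) * (1-u)^k * ((1-u)-(1-v)) := by
          have := pow_sub_pow_le_ineq k hx hxy; push_cast at this ⊢; linarith
      _ = ((k:ℝ)+1) * (1-u)^k * (v-u) := by ring
  have h3 : (1-u)^(k+1) = (1-u)^k * (1-u) := pow_succ _ _
  nlinarith [mul_nonneg (mul_nonneg (sub_nonneg.2 huv) hyk)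
    (by nlinarith : (0:ℝ) ≤ 1 - u - ((k:ℝ)+1)*v)]

lemma anti_part (k : ℕ) {u v : ℝ} (h0 : 0 ≤ u) (huv : u ≤ v) (hv1 : v ≤ 1)
    (hu : 1 ≤ ((k:ℝ)+2) * u) : v * (1-v)^(k+1) ≤ u * (1-u)^(k+1) := by
  have hx : (0:ℝ) ≤ 1 - v := by linarith
  have hxy : (1:ℝ) - v ≤ 1 - u := by linarith
  have hd : ((k:ℝ)+1) * (1-v)^k * (v-u) ≤ (1-u)^(k+1) - (1-v)^(k+1) := by
    have := le_pow_sub_pow_ineq k hx hxy; push_cast at this ⊢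
    calc ((k:ℝ)+1) * (1-v)^k * (v-u) = ((k:ℝ)+1) * (1-v)^k * ((1-u)-(1-v)) := by ring
      _ ≤ (1-u)^(k+1) - (1-v)^(k+1) := this
  have hxk : (0:ℝ) ≤ (1-v)^k := pow_nonneg hx _
  have h3 : (1-v)^(k+1) = (1-v)^k * (1-v) := pow_succ _ _
  have h5 : (0:ℝ) ≤ ((k:ℝ)+1)*u - 1 + v := by nlinarith
  have h6 : u*(((k:ℝ)+1) * (1-v)^k * (v-u)) ≤ u*((1-u)^(k+1) - (1-v)^(k+1)) :=
    mul_le_mul_of_nonneg_left hd h0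
  nlinarith [mul_nonneg (mul_nonneg (sub_nonneg.2 huv) hxk) h5]

lemma sq_phi_aux (n : ℕ) {w : ℝ} (hw : 0 ≤ w) : ((Real.sqrt w)^(n+1))^2 = w^(n+1) := by
  rw [← pow_mul, mul_comm, pow_mul, Real.sq_sqrt hw]

lemma psi_le (n : ℕ) {p q : ℝ} (hp : 0 ≤ p) (hq : 0 ≤ q) (hp1 : p ≤ 1) (hq1 : q ≤ 1)
    (hsq : p^2*(1-p^2)^(n+1) ≤ q^2*(1-q^2)^(n+1)) :
    p*(Real.sqrt (1-p^2))^(n+1) ≤ q*(Real.sqrt (1-q^2))^(n+1) := by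
  have hp2 : (0:ℝ) ≤ 1 - p^2 := by nlinarith
  have hq2 : (0:ℝ) ≤ 1 - q^2 := by nlinarith
  have hL : (0:ℝ) ≤ p*(Real.sqrt (1-p^2))^(n+1) :=
    mul_nonneg hp (pow_nonneg (Real.sqrt_nonneg _) _)
  have hR : (0:ℝ) ≤ q*(Real.sqrt (1-q^2))^(n+1) :=
    mul_nonneg hq (pow_nonneg (Real.sqrt_nonneg _) _)
  have hL2 : (p*(Real.sqrt (1-p^2))^(n+1))^2 = p^2*(1-p^2)^(n+1) := by
    rw [mul_pow, sq_phi_aux n hp2]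
  have hR2 : (q*(Real.sqrt (1-q^2))^(n+1))^2 = q^2*(1-q^2)^(n+1) := by
    rw [mul_pow, sq_phi_aux n hq2]
  nlinarith [hL, hR, hL2, hR2, hsq]

/-- The comparison function in the key inequality. -/
def Dfun (n : ℕ) (b : ℝ) : ℝ → ℝ := fun y =>
  (Real.sqrt (1-b^2))^(n+1) * ((1 + ((n:ℝ)+2)*b^2) - ((n:ℝ)+3)*b*y)
    - (Real.sqrt (1 - y^2))^(n+3)

lemma hasDerivAt_phi (n : ℕ) {y : ℝ} (hy : y^2 < 1) :
    HasDerivAt (fun y : ℝ => (Real.sqrt (1 - y^2))^(n+3))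
      (-(((n:ℝ)+3) * y * (Real.sqrt (1-y^2))^(n+1))) y := by
  have h0 : (0:ℝ) < 1 - y^2 := by linarith
  have hs : 0 < Real.sqrt (1 - y^2) := Real.sqrt_pos.2 h0
  have h1 : HasDerivAt (fun y : ℝ => 1 - y^2) (-(2*y)) y := by
    simpa using ((hasDerivAt_pow 2 y).const_sub 1)
  have h2 : HasDerivAt (fun y : ℝ => Real.sqrt (1 - y^2))
      (1 / (2 * Real.sqrt (1 - y^2)) * (-(2*y))) y :=
    (Real.hasDerivAt_sqrt (ne_of_gt h0)).comp y h1
  have h3 := h2.pow (n+3)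
  refine h3.congr_deriv ?_
  have hsq : (Real.sqrt (1-y^2))^(n+3-1) = (Real.sqrt (1-y^2))^(n+1) * Real.sqrt (1-y^2) := by
    rw [show n+3-1 = (n+1)+1 from rfl, pow_succ]
  rw [hsq]
  field_simp
  push_cast
  ring

lemma hasDerivAt_Dfun (n : ℕ) (b : ℝ) {y : ℝ} (hy : y^2 < 1) :
    HasDerivAt (Dfun n b)
      (((n:ℝ)+3) * (y*(Real.sqrt (1-y^2))^(n+1) - b*(Real.sqrt (1-b^2))^(n+1))) y := by
  have h1 : HasDerivAt
      (fun y : ℝ => (Real.sqrt (1-b^2))^(n+1) * ((1 + ((n:ℝ)+2)*b^2) - ((n:ℝ)+3)*b*y))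
      ((Real.sqrt (1-b^2))^(n+1) * (-(((n:ℝ)+3)*b))) y := by
    have := (((hasDerivAt_id y).const_mul (((n:ℝ)+3)*b)).const_sub
      (1 + ((n:ℝ)+2)*b^2)).const_mul ((Real.sqrt (1-b^2))^(n+1))
    exact this.congr_deriv (by ring)
  have h2 := h1.sub (hasDerivAt_phi n hy)
  refine h2.congr_deriv ?_
  ring

lemma continuous_Dfun (n : ℕ) (b : ℝ) : Continuous (Dfun n b) := by
  unfold Dfun
  have h1 : Continuous fun y : ℝ => Real.sqrt (1 - y^2) :=
    Real.continuous_sqrt.comp (continuous_const.sub (continuous_pow 2))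
  fun_prop

set_option maxHeartbeats 800000 in
lemma Dfun_nonneg (n : ℕ) {b : ℝ} (hb0 : 0 < b) (hb1 : ((n:ℝ)+2) * b ≤ 1)
    {y : ℝ} (hy0 : 0 ≤ y) (hy1 : y ≤ 1) : 0 ≤ Dfun n b y := by
  have hn2 : (0:ℝ) < (n:ℝ)+2 := by positivity
  have hb1' : b < 1 := by nlinarith
  have hb2 : b^2 < 1 := by nlinarith
  have ha2 : (Real.sqrt (1-b^2))^2 = 1 - b^2 := Real.sq_sqrt (by nlinarith)
  set a : ℝ := Real.sqrt (1-b^2) with ha_def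
  have ha0 : 0 < a := Real.sqrt_pos.2 (by nlinarith)
  set ys : ℝ := Real.sqrt (1/((n:ℝ)+2)) with hys_def
  have hys2 : ys^2 = 1/((n:ℝ)+2) := Real.sq_sqrt (by positivity)
  have hys0 : 0 < ys := Real.sqrt_pos.2 (by positivity)
  have hys1 : ys ≤ 1 := by
    have h1n : 1/((n:ℝ)+2) ≤ 1 := by rw [div_le_one hn2]; linarith
    nlinarith [hys2, sq_nonneg (ys-1), h1n, hys0]
  have hbys : b ≤ ys := by
    rw [hys_def]
    rw [show b = Real.sqrt (b^2) from (Real.sqrt_sq hb0.le).symm]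
    apply Real.sqrt_le_sqrt
    rw [le_div_iff₀ hn2]
    nlinarith
  have hDb : Dfun n b b = 0 := by
    unfold Dfun
    have h1 : (1 + ((n:ℝ)+2)*b^2) - ((n:ℝ)+3)*b*b = a^2 := by rw [ha2]; ring
    rw [h1, ← ha_def, ← pow_add, show n+1+2 = n+3 from rfl, sub_self]
  have hD1 : 0 ≤ Dfun n b 1 := by
    unfold Dfun
    have h1 : Real.sqrt (1 - (1:ℝ)^2) = 0 := by norm_num
    rw [h1]
    have h2 : (0:ℝ)^(n+3) = 0 := by simp
    rw [h2, sub_zero]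
    apply mul_nonneg (pow_nonneg ha0.le _)
    nlinarith
  have part1 : ∀ z ∈ Set.Icc (0:ℝ) b, 0 ≤ Dfun n b z := by
    have hanti : AntitoneOn (Dfun n b) (Set.Icc 0 b) := by
      apply antitoneOn_of_deriv_nonpos (convex_Icc 0 b)
        (continuous_Dfun n b).continuousOn
      · intro t ht
        rw [interior_Icc] at ht
        exact (hasDerivAt_Dfun n b
          (by nlinarith [ht.1, ht.2] : t^2 < 1)).differentiableAt.differentiableWithinAt
      · intro t ht
        rw [interior_Icc] at ht
        have ht2 : t^2 < 1 := by nlinarith [ht.1, ht.2]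
        rw [(hasDerivAt_Dfun n b ht2).deriv]
        have hle : t*(Real.sqrt (1-t^2))^(n+1) ≤ b*(Real.sqrt (1-b^2))^(n+1) := by
          apply psi_le n ht.1.le (by linarith) (by nlinarith [ht.1, ht.2]) hb1'.le
          exact mono_part n (by positivity) (by nlinarith [ht.1, ht.2]) (by nlinarith)
        nlinarith
    intro z hz
    have := hanti hz (Set.right_mem_Icc.2 (by linarith : (0:ℝ) ≤ b)) hz.2
    rw [hDb] at this
    linarith
  have part2 : ∀ z ∈ Set.Icc b ys, 0 ≤ Dfun n b z := by
    have hmono : MonotoneOn (Dfun n b) (Set.Icc b ys) := by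
      apply monotoneOn_of_deriv_nonneg (convex_Icc b ys)
        (continuous_Dfun n b).continuousOn
      · intro t ht
        rw [interior_Icc] at ht
        have ht2 : t^2 < 1 := by nlinarith [ht.1, ht.2, hys0, hys1]
        exact (hasDerivAt_Dfun n b ht2).differentiableAt.differentiableWithinAt
      · intro t ht
        rw [interior_Icc] at ht
        have ht2 : t^2 < 1 := by nlinarith [ht.1, ht.2, hys0, hys1]
        rw [(hasDerivAt_Dfun n b ht2).deriv]
        have hle : b*(Real.sqrt (1-b^2))^(n+1) ≤ t*(Real.sqrt (1-t^2))^(n+1) := by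
          have ht0 : (0:ℝ) < t := lt_of_le_of_lt hb0.le ht.1
          have hts : t^2 < ys^2 := by nlinarith [ht.1, ht.2, hb0]
          rw [hys2] at hts
          have hcond : ((n:ℝ)+2) * t^2 ≤ 1 := by
            have h9 : ((n:ℝ)+2) * t^2 ≤ ((n:ℝ)+2) * (1/((n:ℝ)+2)) :=
              mul_le_mul_of_nonneg_left (le_of_lt hts) (by positivity)
            have h10 : ((n:ℝ)+2) * (1/((n:ℝ)+2)) = 1 := by field_simp
            linarith
          apply psi_le n hb0.le ht0.le hb1'.le (by nlinarith [ht.2, hys1, hys0])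
          exact mono_part n (by positivity) (by nlinarith [ht.1, hb0]) (by linarith [hcond])
        nlinarith
    intro z hz
    have := hmono (Set.left_mem_Icc.2 (by linarith [hz.1, hz.2] : b ≤ ys)) hz hz.1
    rw [hDb] at this
    linarith
  have part3 : ∀ z ∈ Set.Icc ys 1, 0 ≤ Dfun n b z := by
    have hconc : ConcaveOn ℝ (Set.Icc ys 1) (Dfun n b) := by
      apply AntitoneOn.concaveOn_of_deriv (convex_Icc ys 1)
        (continuous_Dfun n b).continuousOn
      · intro t ht
        rw [interior_Icc] at ht
        have ht2 : t^2 < 1 := by nlinarith [ht.1, ht.2, hys0]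
        exact (hasDerivAt_Dfun n b ht2).differentiableAt.differentiableWithinAt
      · rw [interior_Icc]
        intro t1 h1 t2 h2 h12
        have h1a : t1^2 < 1 := by nlinarith [h1.1, h1.2, hys0]
        have h2a : t2^2 < 1 := by nlinarith [h2.1, h2.2, hys0]
        rw [(hasDerivAt_Dfun n b h1a).deriv, (hasDerivAt_Dfun n b h2a).deriv]
        have hle : t2*(Real.sqrt (1-t2^2))^(n+1) ≤ t1*(Real.sqrt (1-t1^2))^(n+1) := by
          apply psi_le n (by linarith [h2.1, hys0] : (0:ℝ) ≤ t2)
            (by linarith [h1.1, hys0] : (0:ℝ) ≤ t1) (le_of_lt h2.2) (le_of_lt h1.2)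
          have hts : ys^2 ≤ t1^2 := by nlinarith [h1.1, hys0]
          rw [hys2] at hts
          have hcond : 1 ≤ ((n:ℝ)+2) * t1^2 := by
            have h9 : ((n:ℝ)+2) * (1/((n:ℝ)+2)) ≤ ((n:ℝ)+2) * t1^2 :=
              mul_le_mul_of_nonneg_left hts (by positivity)
            have h10 : ((n:ℝ)+2) * (1/((n:ℝ)+2)) = 1 := by field_simp
            linarith
          exact anti_part n (by positivity) (by nlinarith [h1.1, hys0]) (by nlinarith [h2.2]) hcond
        nlinarith
    intro z hz
    have hseg : z ∈ segment ℝ ys (1:ℝ) := by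
      rw [segment_eq_Icc hys1]; exact hz
    have := hconc.ge_on_segment (Set.left_mem_Icc.2 hys1) (Set.right_mem_Icc.2 hys1) hseg
    have hDys : 0 ≤ Dfun n b ys := part2 ys ⟨hbys, le_refl _⟩
    calc (0:ℝ) ≤ min (Dfun n b ys) (Dfun n b 1) := le_min hDys hD1
      _ ≤ Dfun n b z := this
  rcases le_or_gt y b with h | h
  · exact part1 y ⟨hy0, h⟩
  · rcases le_or_gt y ys with h' | h'
    · exact part2 y ⟨h.le, h'⟩
    · exact part3 y ⟨h'.le, hy1⟩

lemma Dfun_nonneg' (n : ℕ) {b : ℝ} (hb0 : 0 < b) (hb1 : ((n:ℝ)+2) * b ≤ 1)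
    {y : ℝ} (hy0 : 0 ≤ y) (hy1 : y ≤ 1) :
    (Real.sqrt (1 - y^2))^(n+3)
      ≤ (Real.sqrt (1-b^2))^(n+1) * ((1 + ((n:ℝ)+2)*b^2) - ((n:ℝ)+3)*b*y) := by
  have := Dfun_nonneg n hb0 hb1 hy0 hy1
  unfold Dfun at this
  linarith

end Aux

set_option maxHeartbeats 1000000

/-- For `m ≥ 3`, `0 < b ≤ 1/(m-1)` and `a = √(1-b²)`, the map
`f(λ) = (aλ, bλ^m)` maps `𝔻` into the Euclidean unit ball `𝔹₂ ⊆ ℂ²` and is an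
`(m+1)`-geodesic of `𝔹₂`. -/
theorem special_map_is_geodesic_of_ball
    (m : ℕ) (hm : 3 ≤ m) (b : ℝ) (hb0 : 0 < b) (hb1 : b ≤ 1 / ((m : ℝ) - 1))
    (a : ℝ) (ha : a = Real.sqrt (1 - b ^ 2))
    (f : ℂ → Fin 2 → ℂ) (hf : f = fun z => ![(a : ℂ) * z, (b : ℂ) * z ^ m]) :
    Set.MapsTo f unitDisc (euclideanBall 2) ∧ IsGeodesic (euclideanBall 2) f (m + 1) := by
  obtain ⟨n, rfl⟩ : ∃ n, m = n + 3 := ⟨m - 3, by omega⟩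
  have hmr : ((n+3 : ℕ) : ℝ) - 1 = (n:ℝ) + 2 := by push_cast; ring
  have hn2 : (0:ℝ) < (n:ℝ) + 2 := by positivity
  rw [hmr] at hb1
  have hb1' : ((n:ℝ)+2) * b ≤ 1 := by
    calc ((n:ℝ)+2)*b ≤ ((n:ℝ)+2)*(1/((n:ℝ)+2)) := by
          apply mul_le_mul_of_nonneg_left hb1 (by positivity)
      _ = 1 := by field_simp
  have hbb1 : b < 1 := by nlinarith
  have hb2 : b^2 < 1 := by nlinarith
  have ha2 : a^2 = 1 - b^2 := by rw [ha]; exact Real.sq_sqrt (by nlinarith)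
  have ha0 : 0 < a := by rw [ha]; exact Real.sqrt_pos.2 (by nlinarith)
  have ha1 : a ≤ 1 := by nlinarith
  set c : ℝ := 1 + ((n:ℝ)+2)*b^2 with hc_def
  have hc : 0 < c := by positivity
  set A : ℝ := a^(n+1) with hA_def
  have hA : 0 < A := by positivity
  set s : ℝ := 1/(A*c) with hs_def
  set t : ℝ := ((n:ℝ)+3)*b/c with ht_def
  have hs0 : 0 < s := by positivity
  have ht0 : 0 < t := by positivity
  have KEY : ∀ x y : ℝ, 0 ≤ x → 0 ≤ y → x^2 + y^2 < 1 → s*x^(n+3) + t*y < 1 := by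
    intro x y hx hy hxy
    have hy1 : y ≤ 1 := by nlinarith
    have hkey := Dfun_nonneg' n hb0 hb1' hy hy1
    rw [← ha] at hkey
    rw [← hA_def, ← hc_def] at hkey
    have hx' : x < Real.sqrt (1 - y^2) := by
      rw [show x = Real.sqrt (x^2) from (Real.sqrt_sq hx).symm]
      exact Real.sqrt_lt_sqrt (sq_nonneg x) (by nlinarith)
    have hxpow : x^(n+3) < (Real.sqrt (1 - y^2))^(n+3) :=
      pow_lt_pow_left₀ hx' hx (by omega)
    have h1 : s*x^(n+3) + t*y < s*((Real.sqrt (1 - y^2))^(n+3)) + t*y := by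
      have := mul_lt_mul_of_pos_left hxpow hs0
      linarith
    have h2 : s*((Real.sqrt (1 - y^2))^(n+3)) + t*y ≤ s*(A*(c - ((n:ℝ)+3)*b*y)) + t*y := by
      have := mul_le_mul_of_nonneg_left hkey hs0.le
      linarith
    have h3 : s*(A*(c - ((n:ℝ)+3)*b*y)) + t*y = 1 := by
      rw [hs_def, ht_def]
      field_simp
      ring
    linarith
  have partA : Set.MapsTo f unitDisc (euclideanBall 2) := by
    intro z hz
    rw [hf]
    simp only [euclideanBall, Set.mem_setOf_eq, Fin.sum_univ_two, Matrix.cons_val_zero,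
      Matrix.cons_val_one, Matrix.head_cons]
    rw [unitDisc, mem_ball_zero_iff] at hz
    have hzn : 0 ≤ ‖z‖ := norm_nonneg z
    have e1 : ‖(a:ℂ) * z‖ = a * ‖z‖ := by
      rw [norm_mul, Complex.norm_real, Real.norm_eq_abs, abs_of_pos ha0]
    have e2 : ‖(b:ℂ) * z^(n+3)‖ = b * ‖z‖^(n+3) := by
      rw [norm_mul, Complex.norm_real, Real.norm_eq_abs, abs_of_pos hb0, norm_pow]
    rw [e1, e2]
    have hm1 : ‖z‖^(n+3) ≤ ‖z‖ := pow_le_of_le_one hzn hz.le (by omega)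
    have hm2 : (‖z‖^(n+3))^2 ≤ ‖z‖^2 := by nlinarith [pow_nonneg hzn (n+3)]
    nlinarith [sq_nonneg a, sq_nonneg b, hm2, hz, hzn]
  refine ⟨partA, ?_⟩
  refine ⟨fun z => (s:ℂ)*(z 0)^(n+3) + (t:ℂ)*(z 1), ?_, ?_, n+3, by omega, by omega, ?_⟩
  · apply Differentiable.differentiableOn
    apply Differentiable.add
    · exact (differentiable_const _).mul ((differentiable_apply 0).pow _)
    · exact (differentiable_const _).mul (differentiable_apply 1)
  · intro z hz
    simp only [euclideanBall, Set.mem_setOf_eq, Fin.sum_univ_two] at hz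
    rw [unitDisc, mem_ball_zero_iff]
    calc ‖(s:ℂ)*(z 0)^(n+3) + (t:ℂ)*(z 1)‖
        ≤ ‖(s:ℂ)*(z 0)^(n+3)‖ + ‖(t:ℂ)*(z 1)‖ := norm_add_le _ _
      _ = s*‖z 0‖^(n+3) + t*‖z 1‖ := by
          rw [norm_mul, norm_mul, norm_pow, Complex.norm_real, Complex.norm_real,
            Real.norm_eq_abs, Real.norm_eq_abs, abs_of_pos hs0, abs_of_pos ht0]
      _ < 1 := KEY _ _ (norm_nonneg _) (norm_nonneg _) hz
  · refine ⟨1, fun _ => 0, by simp, fun j => by simp, ?_⟩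
    intro z hz
    have hprod : ∏ _j : Fin (n+3), mobius 0 z = z^(n+3) := by
      simp [mobius]
    rw [hprod, one_mul, hf]
    simp only [Matrix.cons_val_zero, Matrix.cons_val_one, Matrix.head_cons]
    have hst : s * a^(n+3) + t*b = 1 := by
      rw [hs_def, ht_def]
      have h1 : a^(n+3) = a^(n+1) * a^2 := by rw [← pow_add]
      field_simp
      rw [h1, ha2]
      ring
    have hcast : ((s:ℂ)*((a:ℂ)*z)^(n+3) + (t:ℂ)*((b:ℂ)*z^(n+3)))
        = ((s * a^(n+3) + t*b : ℝ) : ℂ) * z^(n+3) := by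
      push_cast
      ring
    rw [hcast, hst]
    push_cast
    ring
end
end

section
/- Let D ⊆ ℂⁿ be a domain, let λ₁,…,λ_m ∈ 𝔻 be pairwise distinct, and for each index k let λ₁^{(k)},…,λ_m^{(k)} ∈ 𝔻 be pairwise distinct points with λ_j^{(k)} → λ_j as k → ∞ for each j. If f : 𝔻 → D is holomorphic and, for every k, f is a weak m-extremal for λ₁^{(k)},…,λ_m^{(k)}, then f is a weak m-extremal for λ₁,…,λ_m. -/
open Complex Metric Set Filter

noncomputable section

variable {E : Type*} [NormedAddCommGroup E] [NormedSpace ℂ E]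

/-- If `f` is a weak `m`-extremal for pairwise distinct nodes
`λ₁^{(k)}, …, λ_m^{(k)}` converging (as `k → ∞`) to pairwise distinct nodes
`λ₁, …, λ_m ∈ 𝔻`, then `f` is a weak `m`-extremal for `λ₁, …, λ_m`. -/
theorem weak_extremal_of_limit_nodes
    {n : ℕ} (D : Set (Fin n → ℂ)) (hDo : IsOpen D) (hDc : IsConnected D)
    (m : ℕ) (hm : 2 ≤ m)
    (lam : Fin m → ℂ) (hinj : Function.Injective lam)
    (hmem : ∀ j, lam j ∈ unitDisc)
    (lamk : ℕ → Fin m → ℂ) (hinjk : ∀ k, Function.Injective (lamk k))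
    (hmemk : ∀ k j, lamk k j ∈ unitDisc)
    (htend : ∀ j, Filter.Tendsto (fun k => lamk k j) Filter.atTop (nhds (lam j)))
    (f : ℂ → Fin n → ℂ) (hf : DifferentiableOn ℂ f unitDisc)
    (hfD : Set.MapsTo f unitDisc D)
    (hext : ∀ k, WeakExtremalFor D f (lamk k)) :
    WeakExtremalFor D f lam := by
  rintro ⟨U, h, hUo, hU1, hhd, hhD, hhint⟩
  -- enlarge the closed disc slightly inside U
  obtain ⟨δ, hδ, hth⟩ :=
    (isCompact_closedBall (0:ℂ) 1).exists_thickening_subset_open hUo hU1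
  set r : ℝ := 1 + δ/2 with hr
  have hr1 : 1 < r := by simp [hr]; linarith
  have hKU : Metric.closedBall (0:ℂ) r ⊆ U := by
    refine subset_trans ?_ hth
    rw [thickening_closedBall hδ zero_le_one]
    intro x hx
    simp only [Metric.mem_closedBall, Metric.mem_ball] at hx ⊢
    calc dist x 0 ≤ r := hx
      _ < δ + 1 := by simp [hr]; linarith
  have hKc : IsCompact (Metric.closedBall (0:ℂ) r) := isCompact_closedBall _ _
  have hhK : ContinuousOn h (Metric.closedBall (0:ℂ) r) := hhd.continuousOn.mono hKU
  have himg : IsCompact (h '' Metric.closedBall (0:ℂ) r) := hKc.image_of_continuousOn hhK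
  have himgD : h '' Metric.closedBall (0:ℂ) r ⊆ D := by
    rintro _ ⟨x, hx, rfl⟩; exact hhD (hKU hx)
  obtain ⟨ε, hε, hthD⟩ := himg.exists_thickening_subset_open hDo himgD
  -- definitions
  set d : ℕ → Fin m → (Fin n → ℂ) := fun k j => f (lamk k j) - h (lamk k j) with hdDef
  set P : ℕ → Fin m → ℝ := fun k j => ∏ i ∈ Finset.univ.erase j, ‖lamk k j - lamk k i‖
    with hPDef
  set L : ℕ → Fin m → ℂ → ℂ :=
    fun k j z => ∏ i ∈ Finset.univ.erase j, (z - lamk k i) / (lamk k j - lamk k i) with hLDef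
  set t : ℕ → ℝ := fun k => ∑ j, ((r+1)^m / P k j) * ‖d k j‖ with htDef
  have hunit_open : IsOpen unitDisc := isOpen_ball
  -- d → 0
  have hdk : ∀ j, Tendsto (fun k => d k j) atTop (nhds 0) := by
    intro j
    have hfc : ContinuousAt f (lam j) :=
      hf.continuousOn.continuousAt (hunit_open.mem_nhds (hmem j))
    have hlamU : lam j ∈ U := hU1 (Metric.ball_subset_closedBall (hmem j))
    have hhc : ContinuousAt h (lam j) :=
      hhd.continuousOn.continuousAt (hUo.mem_nhds hlamU)
    have : Tendsto (fun k => f (lamk k j) - h (lamk k j)) atTop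
        (nhds (f (lam j) - h (lam j))) :=
      ((hfc.tendsto.comp (htend j)).sub (hhc.tendsto.comp (htend j)))
    simpa [hdDef, hhint j] using this
  -- P → positive limit
  have hPk : ∀ j, Tendsto (fun k => P k j) atTop
      (nhds (∏ i ∈ Finset.univ.erase j, ‖lam j - lam i‖)) := by
    intro j
    refine tendsto_finset_prod _ fun i _ => ?_
    exact ((htend j).sub (htend i)).norm
  have hPinf_pos : ∀ j, 0 < ∏ i ∈ Finset.univ.erase j, ‖lam j - lam i‖ := by
    intro j
    refine Finset.prod_pos fun i hi => ?_
    have hij : i ≠ j := (Finset.mem_erase.mp hi).1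
    have : lam j ≠ lam i := fun e => hij (hinj e).symm
    exact norm_pos_iff.mpr (sub_ne_zero.mpr this)
  have hPpos : ∀ k j, 0 < P k j := by
    intro k j
    refine Finset.prod_pos fun i hi => ?_
    have hij : i ≠ j := (Finset.mem_erase.mp hi).1
    have : lamk k j ≠ lamk k i := fun e => hij (hinjk k e).symm
    exact norm_pos_iff.mpr (sub_ne_zero.mpr this)
  -- t → 0
  have htt : Tendsto t atTop (nhds 0) := by
    have hterm : ∀ j : Fin m,
        Tendsto (fun k => ((r+1)^m / P k j) * ‖d k j‖) atTop (nhds 0) := by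
      intro j
      have h1 : Tendsto (fun k => (r+1)^m / P k j) atTop
          (nhds ((r+1)^m / ∏ i ∈ Finset.univ.erase j, ‖lam j - lam i‖)) :=
        tendsto_const_nhds.div (hPk j) (ne_of_gt (hPinf_pos j))
      have h2 : Tendsto (fun k => ‖d k j‖) atTop (nhds 0) := by
        simpa using (hdk j).norm
      simpa using h1.mul h2
    have := tendsto_finset_sum Finset.univ (fun j _ => hterm j)
    simpa [htDef] using this
  -- uniform bound on the correction
  have hbound : ∀ k z, z ∈ Metric.closedBall (0:ℂ) r →
      ‖∑ j, L k j z • d k j‖ ≤ t k := by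
    intro k z hz
    refine (norm_sum_le _ _).trans ?_
    refine Finset.sum_le_sum fun j _ => ?_
    rw [norm_smul]
    refine mul_le_mul_of_nonneg_right ?_ (norm_nonneg _)
    have heq : ‖L k j z‖ = (∏ i ∈ Finset.univ.erase j, ‖z - lamk k i‖) / P k j := by
      rw [hLDef]
      simp only
      rw [norm_prod]
      rw [← Finset.prod_div_distrib]
      exact Finset.prod_congr rfl fun i _ => norm_div _ _
    rw [heq]
    have hnum : (∏ i ∈ Finset.univ.erase j, ‖z - lamk k i‖) ≤ (r+1)^m := by
      have h1 : (∏ i ∈ Finset.univ.erase j, ‖z - lamk k i‖) ≤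
          ∏ _i ∈ Finset.univ.erase j, (r+1) := by
        refine Finset.prod_le_prod (fun i _ => norm_nonneg _) fun i _ => ?_
        have hzr : ‖z‖ ≤ r := by simpa using hz
        have hli : ‖lamk k i‖ < 1 := by simpa [unitDisc] using hmemk k i
        calc ‖z - lamk k i‖ ≤ ‖z‖ + ‖lamk k i‖ := norm_sub_le _ _
          _ ≤ r + 1 := by linarith
      rw [Finset.prod_const] at h1
      refine h1.trans ?_
      refine pow_le_pow_right₀ (by linarith) ?_
      calc (Finset.univ.erase j).card ≤ (Finset.univ : Finset (Fin m)).card :=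
            Finset.card_le_card (Finset.erase_subset _ _)
        _ = m := Finset.card_fin m
    exact div_le_div_of_nonneg_right hnum (hPpos k j).le
  -- interpolation
  have hinterp : ∀ k j, h (lamk k j) + ∑ i, L k i (lamk k j) • d k i = f (lamk k j) := by
    intro k j
    have hsum : ∑ i, L k i (lamk k j) • d k i = d k j := by
      rw [Finset.sum_eq_single j]
      · have hL1 : L k j (lamk k j) = 1 := by
          rw [hLDef]
          refine Finset.prod_eq_one fun i hi => ?_
          have hij : i ≠ j := (Finset.mem_erase.mp hi).1
          have hne : lamk k j - lamk k i ≠ 0 :=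
            sub_ne_zero.mpr fun e => hij (hinjk k e).symm
          exact div_self hne
        rw [hL1, one_smul]
      · intro i _ hij
        have hL0 : L k i (lamk k j) = 0 := by
          rw [hLDef]
          refine Finset.prod_eq_zero (Finset.mem_erase.mpr ⟨hij.symm, Finset.mem_univ j⟩) ?_
          simp
        rw [hL0, zero_smul]
      · intro hj; exact absurd (Finset.mem_univ j) hj
    rw [hsum, hdDef]
    simp
  -- differentiability
  have hdiff : ∀ k, DifferentiableOn ℂ (fun z => h z + ∑ i, L k i z • d k i)
      (Metric.ball (0:ℂ) r) := by
    intro k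
    refine DifferentiableOn.add
      (hhd.mono (Metric.ball_subset_closedBall.trans hKU)) ?_
    refine Differentiable.differentiableOn ?_
    refine Differentiable.fun_sum fun i _ => ?_
    have hLd : Differentiable ℂ (L k i) := by
      rw [hLDef]
      refine Differentiable.fun_finsetProd fun i' _ => ?_
      exact (differentiable_id.sub_const _).div_const _
    exact hLd.smul_const (d k i)
  -- choose k with t k < ε and derive a contradiction
  obtain ⟨k, hk⟩ := (htt.eventually_lt_const hε).exists
  refine hext k ⟨Metric.ball (0:ℂ) r, fun z => h z + ∑ i, L k i z • d k i,
    Metric.isOpen_ball, Metric.closedBall_subset_ball hr1, hdiff k, ?_, hinterp k⟩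
  intro z hz
  have hz' : z ∈ Metric.closedBall (0:ℂ) r := Metric.ball_subset_closedBall hz
  apply hthD
  rw [Metric.mem_thickening_iff]
  refine ⟨h z, ⟨z, hz', rfl⟩, ?_⟩
  rw [dist_eq_norm]
  have : ‖h z + ∑ i, L k i z • d k i - h z‖ = ‖∑ i, L k i z • d k i‖ := by
    congr 1; ring
  rw [this]
  exact lt_of_le_of_lt (hbound k z hz') hk
end
end

section
/- Let D ⊆ ℂⁿ be a domain, let λ₁,…,λ_m ∈ 𝔻 be pairwise distinct, and let f_k, f : 𝔻 → D be holomorphic maps such that f_k(λ_j) → f(λ_j) as k → ∞ for each j = 1,…,m. If every f_k is a weak m-extremal for λ₁,…,λ_m, then f is a weak m-extremal for λ₁,…,λ_m. -/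
open Complex Metric Set Filter

noncomputable section

variable {E : Type*} [NormedAddCommGroup E] [NormedSpace ℂ E]

/-- If holomorphic maps `f_k : 𝔻 → D` are weak `m`-extremals
for fixed pairwise distinct nodes `λ₁, …, λ_m` and `f_k(λ_j) → f(λ_j)` for a
holomorphic `f : 𝔻 → D`, then `f` is a weak `m`-extremal for `λ₁, …, λ_m`. -/
theorem weak_extremal_of_limit_values
    {n : ℕ} (D : Set (Fin n → ℂ)) (hDo : IsOpen D) (hDc : IsConnected D)
    (m : ℕ) (hm : 2 ≤ m)
    (lam : Fin m → ℂ) (hinj : Function.Injective lam)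
    (hmem : ∀ j, lam j ∈ unitDisc)
    (fk : ℕ → ℂ → Fin n → ℂ) (f : ℂ → Fin n → ℂ)
    (hfk : ∀ k, DifferentiableOn ℂ (fk k) unitDisc)
    (hfkD : ∀ k, Set.MapsTo (fk k) unitDisc D)
    (hf : DifferentiableOn ℂ f unitDisc) (hfD : Set.MapsTo f unitDisc D)
    (htend : ∀ j, Filter.Tendsto (fun k => fk k (lam j)) Filter.atTop (nhds (f (lam j))))
    (hext : ∀ k, WeakExtremalFor D (fk k) lam) :
    WeakExtremalFor D f lam := by
  rintro ⟨U, h, hUo, hUb, hhd, hhD, hhj⟩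
  -- find a slightly larger closed ball inside U
  obtain ⟨δ, hδ, hthick⟩ :=
    (isCompact_closedBall (0 : ℂ) 1).exists_thickening_subset_open hUo hUb
  set r : ℝ := 1 + δ / 2 with hr
  have hr1 : 1 < r := by simp [hr]; positivity
  have hrU : Metric.closedBall (0 : ℂ) r ⊆ U := by
    refine subset_trans (fun x hx => ?_) hthick
    have hxr : ‖x‖ ≤ 1 + δ / 2 := by simpa [hr] using hx
    rcases le_or_gt ‖x‖ 1 with hx1 | hx1
    · exact Metric.self_subset_thickening hδ _ (by simpa [Metric.mem_closedBall, dist_eq_norm] using hx1)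
    · have hx0 : x ≠ 0 := by intro h0; rw [h0, norm_zero] at hx1; linarith
      have hxn : ‖x‖ ≠ 0 := norm_ne_zero_iff.mpr hx0
      refine Metric.mem_thickening_iff.mpr ⟨(‖x‖ : ℂ)⁻¹ • x, ?_, ?_⟩
      · have : ‖(‖x‖ : ℂ)⁻¹ • x‖ = 1 := by
          rw [norm_smul, norm_inv, Complex.norm_real, Real.norm_of_nonneg (norm_nonneg x),
            inv_mul_cancel₀ hxn]
        simpa [Metric.mem_closedBall, dist_eq_norm] using this.le
      · have hinv : ‖x‖⁻¹ ≤ 1 := inv_le_one_of_one_le₀ hx1.le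
        have hdist : dist x ((‖x‖ : ℂ)⁻¹ • x) = ‖x‖ - 1 := by
          rw [dist_eq_norm]
          have hxe : x - (‖x‖ : ℂ)⁻¹ • x = ((1 - ‖x‖⁻¹ : ℝ) : ℂ) • x := by
            push_cast; rw [sub_smul, one_smul]
          rw [hxe, norm_smul, Complex.norm_real, Real.norm_of_nonneg (by linarith),
            sub_mul, one_mul, inv_mul_cancel₀ hxn]
        rw [hdist]; linarith
  -- the image of the closed ball is compact inside D
  set K : Set (Fin n → ℂ) := h '' Metric.closedBall 0 r with hK
  have hKc : IsCompact K :=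
    (isCompact_closedBall 0 r).image_of_continuousOn
      ((hhd.continuousOn).mono hrU)
  have hKD : K ⊆ D := by
    rintro _ ⟨x, hx, rfl⟩; exact hhD (hrU hx)
  obtain ⟨ε, hε, hεD⟩ := hKc.exists_thickening_subset_open hDo hKD
  -- Lagrange basis functions
  set L : Fin m → ℂ → ℂ := fun j z => ∏ i ∈ Finset.univ.erase j, (z - lam i) / (lam j - lam i)
  have hLd : ∀ j, Differentiable ℂ (L j) := by
    intro j
    apply Differentiable.fun_finsetProd
    intro i _
    have : (fun z => (z - lam i) / (lam j - lam i)) =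
        fun z => (lam j - lam i)⁻¹ * (z - lam i) := by
      funext z; rw [div_eq_inv_mul]
    rw [this]
    exact (differentiable_id.sub_const _).const_mul _
  have hLself : ∀ j, L j (lam j) = 1 := by
    intro j
    apply Finset.prod_eq_one
    intro i hi
    have : lam j - lam i ≠ 0 := sub_ne_zero.mpr fun hc => (Finset.mem_erase.mp hi).1 (hinj hc).symm
    exact div_self this
  have hLne : ∀ j i, i ≠ j → L j (lam i) = 0 := by
    intro j i hij
    apply Finset.prod_eq_zero (Finset.mem_erase.mpr ⟨hij, Finset.mem_univ i⟩)
    simp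
  -- bounds for L on the closed ball
  have hC : ∀ j, ∃ C : ℝ, ∀ z ∈ Metric.closedBall (0 : ℂ) r, ‖L j z‖ ≤ C := by
    intro j
    obtain ⟨C, hC⟩ := (isCompact_closedBall (0 : ℂ) r).exists_bound_of_continuousOn
      (hLd j).continuous.continuousOn
    exact ⟨C, hC⟩
  choose C hCb using hC
  set B : Fin m → ℝ := fun j => max (C j) 0
  have hB : ∀ j, ∀ z ∈ Metric.closedBall (0 : ℂ) r, ‖L j z‖ ≤ B j :=
    fun j z hz => le_max_of_le_left (hCb j z hz)
  set S : ℝ := (∑ j, B j) + 1 with hS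
  have hSpos : 0 < S := by
    have : 0 ≤ ∑ j, B j := Finset.sum_nonneg fun j _ => le_max_right _ _
    linarith
  -- pick k with all deviations small
  have hev : ∀ᶠ k in atTop, ∀ j, dist (fk k (lam j)) (f (lam j)) < ε / S := by
    rw [eventually_all]
    intro j
    exact Metric.tendsto_nhds.mp (htend j) (ε / S) (by positivity)
  obtain ⟨k, hk⟩ := hev.exists
  set d : Fin m → Fin n → ℂ := fun j => fk k (lam j) - f (lam j) with hd
  have hdsmall : ∀ j, ‖d j‖ ≤ ε / S := by
    intro j
    have := hk j
    rw [dist_eq_norm] at this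
    exact le_of_lt this
  -- the perturbed map
  set h' : ℂ → Fin n → ℂ := fun z => h z + ∑ j, L j z • d j with hh'
  have hnorm : ∀ z ∈ Metric.closedBall (0 : ℝ) r, True := fun _ _ => trivial
  have hpert : ∀ z ∈ Metric.closedBall (0 : ℂ) r, ‖∑ j, L j z • d j‖ < ε := by
    intro z hz
    calc ‖∑ j, L j z • d j‖ ≤ ∑ j, ‖L j z • d j‖ := norm_sum_le _ _
      _ ≤ ∑ j, B j * (ε / S) := by
          apply Finset.sum_le_sum
          intro j _
          rw [norm_smul]
          exact mul_le_mul (hB j z hz) (hdsmall j) (norm_nonneg _)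
            (le_max_right _ _)
      _ = (∑ j, B j) * (ε / S) := by rw [Finset.sum_mul]
      _ < S * (ε / S) := by
          apply mul_lt_mul_of_pos_right _ (by positivity)
          simp [hS]
      _ = ε := by field_simp
  refine hext k ⟨Metric.ball 0 r, h', Metric.isOpen_ball, ?_, ?_, ?_, ?_⟩
  · exact Metric.closedBall_subset_ball hr1
  · apply DifferentiableOn.add
    · exact hhd.mono (Metric.ball_subset_closedBall.trans hrU)
    · apply Differentiable.differentiableOn
      apply Differentiable.fun_sum
      intro j _
      exact Differentiable.smul (hLd j) (differentiable_const _)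
  · intro z hz
    have hz' : z ∈ Metric.closedBall (0 : ℂ) r := Metric.ball_subset_closedBall hz
    apply hεD
    rw [Metric.mem_thickening_iff]
    refine ⟨h z, ⟨z, hz', rfl⟩, ?_⟩
    rw [dist_eq_norm]
    simpa [hh'] using hpert z hz'
  · intro i
    have : h' (lam i) = h (lam i) + d i := by
      simp only [hh']
      congr 1
      rw [Finset.sum_eq_single i]
      · rw [hLself i, one_smul]
      · intro j _ hji
        rw [hLne j i fun hc => hji hc.symm, zero_smul]
      · intro hi; exact absurd (Finset.mem_univ i) hi
    rw [this, hhj i, hd]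
    simp
end
end

section
/- Let k ∈ ℕ₀ⁿ \ {0} and let D ⊆ ℂⁿ be a k-balanced convex domain. Let f : 𝔻 → D be a holomorphic map of the form f = (m_α^{k₁}·φ₁,…,m_α^{k_n}·φ_n), where α ∈ 𝔻 and φ₁,…,φ_n : 𝔻 → ℂ are holomorphic. Then, writing φ := (φ₁,…,φ_n), either φ(𝔻) ⊆ D or φ(𝔻) ⊆ ∂D. -/
open Complex Metric Set Filter

noncomputable section

variable {E : Type*} [NormedAddCommGroup E] [NormedSpace ℂ E]

open Topology

/-- Convex maximum principle: a holomorphic map on a closed disc with boundary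
values in a closed convex set takes all its values in that set. -/
lemma mem_of_sphere_mem {E : Type*} [NormedAddCommGroup E] [NormedSpace ℂ E]
    {C : Set E} (hC : Convex ℝ C) (hCc : IsClosed C) {g : ℂ → E} {r : ℝ} (hr : 0 < r)
    (hg : DifferentiableOn ℂ g (Metric.closedBall 0 r))
    (hsp : ∀ z ∈ Metric.sphere (0:ℂ) r, g z ∈ C)
    {z : ℂ} (hz : z ∈ Metric.closedBall (0:ℂ) r) : g z ∈ C := by
  by_contra hzC
  obtain ⟨f, u, hfa, hfu⟩ := geometric_hahn_banach_closed_point hC hCc hzC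
  let ℓ : E →L[ℂ] ℂ := f.extendTo𝕜'
  have hre : ∀ x : E, (ℓ x).re = f x := by
    intro x
    exact StrongDual.re_extendRCLike_apply (𝕜 := ℂ) f x
  set G : ℂ → ℂ := fun w => Complex.exp (ℓ (g w)) with hG
  have hGnorm : ∀ w, ‖G w‖ = Real.exp (f (g w)) := by
    intro w
    rw [hG]
    rw [Complex.norm_exp, hre]
  have hGd : DiffContOnCl ℂ G (Metric.ball 0 r) := by
    apply DifferentiableOn.diffContOnCl
    rw [closure_ball (0:ℂ) hr.ne']
    exact Complex.differentiable_exp.comp_differentiableOn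
      (ℓ.differentiable.comp_differentiableOn hg)
  have key : ‖G z‖ ≤ Real.exp u := by
    apply Complex.norm_le_of_forall_mem_frontier_norm_le isBounded_ball hGd
    · intro w hw
      rw [frontier_ball (0:ℂ) hr.ne'] at hw
      rw [hGnorm]
      exact Real.exp_le_exp.mpr (hfa _ (hsp w hw)).le
    · rwa [closure_ball (0:ℂ) hr.ne']
  rw [hGnorm, Real.exp_le_exp] at key
  exact absurd key (not_le.mpr hfu)

/-- Lower bound for the modulus of a Möbius map on a circle of radius `r` close to `1`. -/
lemma mobius_norm_lower {α : ℂ} (hα : ‖α‖ < 1) {s r : ℝ} (hs : 0 ≤ s) (hs1 : s ≤ 1)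
    (hr1 : r ≤ 1)
    (hcond : (1 - ‖α‖^2) * (1 - r^2) ≤ (1 - s^2) * (1 - ‖α‖)^2)
    {z : ℂ} (hz : ‖z‖ = r) : s ≤ ‖mobius α z‖ := by
  have hcz : ‖(starRingEnd ℂ) α * z‖ = ‖α‖ * r := by
    rw [norm_mul, Complex.norm_conj, hz]
  have hr0 : 0 ≤ r := hz ▸ norm_nonneg z
  have hd0 : (0:ℝ) < 1 - ‖α‖ := by linarith
  have hden : 1 - ‖α‖ ≤ ‖1 - (starRingEnd ℂ) α * z‖ := by
    have h := norm_sub_norm_le (1:ℂ) ((starRingEnd ℂ) α * z)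
    rw [norm_one, hcz] at h
    nlinarith [norm_nonneg α]
  have hid : Complex.normSq (1 - (starRingEnd ℂ) α * z) - Complex.normSq (z - α)
      = (1 - Complex.normSq α) * (1 - Complex.normSq z) := by
    simp only [Complex.normSq_apply, Complex.sub_re, Complex.sub_im, Complex.mul_re,
      Complex.mul_im, Complex.one_re, Complex.one_im, Complex.conj_re, Complex.conj_im]
    ring
  have ha2 : Complex.normSq (1 - (starRingEnd ℂ) α * z)
      = ‖(1:ℂ) - (starRingEnd ℂ) α * z‖^2 := by
    rw [Complex.sq_norm]
  have hb2 : Complex.normSq (z - α) = ‖z - α‖^2 := by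
    rw [Complex.sq_norm]
  have hα2 : Complex.normSq α = ‖α‖^2 := by rw [Complex.sq_norm]
  have hz2 : Complex.normSq z = r^2 := by
    rw [← hz, Complex.sq_norm]
  rw [ha2, hb2, hα2, hz2] at hid
  have hmob : ‖mobius α z‖ = ‖z - α‖ / ‖1 - (starRingEnd ℂ) α * z‖ := by
    rw [mobius, norm_div]
  rw [hmob, le_div_iff₀ (by linarith : (0:ℝ) < ‖(1:ℂ) - (starRingEnd ℂ) α * z‖)]
  set a := ‖(1:ℂ) - (starRingEnd ℂ) α * z‖
  set b := ‖z - α‖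
  have hb0 : 0 ≤ b := norm_nonneg _
  have h1 : (1-‖α‖)^2 ≤ a^2 := by nlinarith
  have h1s : (0:ℝ) ≤ 1 - s^2 := by nlinarith
  have h3 : s^2 * a^2 ≤ b^2 := by nlinarith [mul_le_mul_of_nonneg_left h1 h1s]
  by_contra hlt
  push_neg at hlt
  have hsapos : 0 < s * a := lt_of_le_of_lt hb0 hlt
  nlinarith

/-- Let `D ⊆ ℂⁿ` be a `k`-balanced convex domain and let
`f = (m_α^{k₁} φ₁, …, m_α^{k_n} φ_n) : 𝔻 → D` with `φ_j` holomorphic and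
`α ∈ 𝔻`. Then either `φ(𝔻) ⊆ D` or `φ(𝔻) ⊆ ∂D`. -/
theorem quotient_in_domain_or_boundary
    {n : ℕ} (k : Fin n → ℕ) (hk : k ≠ 0)
    (D : Set (Fin n → ℂ)) (hDo : IsOpen D) (hne : D.Nonempty)
    (hconv : Convex ℝ D) (hbal : QuasiBalanced k D)
    (α : ℂ) (hα : α ∈ unitDisc)
    (φ : Fin n → ℂ → ℂ) (hφ : ∀ j, DifferentiableOn ℂ (φ j) unitDisc)
    (f : ℂ → Fin n → ℂ) (hf : f = fun z j => mobius α z ^ k j * φ j z)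
    (hfD : Set.MapsTo f unitDisc D) :
    (∀ z ∈ unitDisc, (fun j => φ j z) ∈ D) ∨
    (∀ z ∈ unitDisc, (fun j => φ j z) ∈ frontier D) := by
  subst hf
  have hαn : ‖α‖ < 1 := by simpa [unitDisc] using hα
  -- Step A: the quotient map sends the disc into the closure of D
  have hclos : ∀ z₀ ∈ unitDisc, (fun j => φ j z₀) ∈ closure D := by
    intro z₀ hz₀
    have hz₀n : ‖z₀‖ < 1 := by simpa [unitDisc] using hz₀
    have key : ∀ s : ℝ, 0 < s → s < 1 →
        (fun j => (s:ℂ)^(k j) * φ j z₀) ∈ closure D := by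
      intro s hs0 hs1
      obtain ⟨r, hzr, hcond, hr1, hrpos⟩ : ∃ r : ℝ, ‖z₀‖ ≤ r ∧
          (1 - ‖α‖^2)*(1-r^2) ≤ (1-s^2)*(1-‖α‖)^2 ∧ r < 1 ∧ 0 < r := by
        have h1 : ∀ᶠ r in 𝓝[<] (1:ℝ), ‖z₀‖ ≤ r :=
          eventually_nhdsWithin_of_eventually_nhds
            ((eventually_gt_nhds hz₀n).mono fun _ h => h.le)
        have h4 : ∀ᶠ r in 𝓝[<] (1:ℝ), (0:ℝ) < r :=
          eventually_nhdsWithin_of_eventually_nhds (eventually_gt_nhds one_pos)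
        have h3 : ∀ᶠ r in 𝓝[<] (1:ℝ), r < 1 := eventually_mem_nhdsWithin
        have h2 : ∀ᶠ r in 𝓝[<] (1:ℝ),
            (1 - ‖α‖^2)*(1-r^2) ≤ (1-s^2)*(1-‖α‖)^2 := by
          have hc : Tendsto (fun r : ℝ => (1 - ‖α‖^2)*(1-r^2)) (𝓝[<] (1:ℝ)) (𝓝 0) := by
            have : ContinuousAt (fun r : ℝ => (1 - ‖α‖^2)*(1-r^2)) 1 := by fun_prop
            have h0 := this.tendsto.mono_left (nhdsWithin_le_nhds (s := Set.Iio (1:ℝ)))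
            simpa using h0
          have hpos : (0:ℝ) < (1-s^2)*(1-‖α‖)^2 := by
            have hq : (0:ℝ) < 1 - s^2 := by nlinarith
            have hw : (0:ℝ) < (1-‖α‖)^2 := pow_pos (by linarith) 2
            exact mul_pos hq hw
          exact hc.eventually_le_const hpos
        obtain ⟨r, hr⟩ := ((h1.and h2).and (h3.and h4)).exists
        exact ⟨r, hr.1.1, hr.1.2, hr.2.1, hr.2.2⟩
      have hsub : Metric.closedBall (0:ℂ) r ⊆ unitDisc := by
        intro w hw
        simp only [Metric.mem_closedBall, dist_zero_right] at hw
        simp only [unitDisc, Metric.mem_ball, dist_zero_right]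
        linarith
      have hdiff : DifferentiableOn ℂ (fun z => fun j => (s:ℂ)^(k j) * φ j z)
          (Metric.closedBall 0 r) := by
        rw [differentiableOn_pi]
        intro j
        exact ((hφ j).mono hsub).const_mul _
      have hsphere : ∀ z ∈ Metric.sphere (0:ℂ) r,
          (fun j => (s:ℂ)^(k j) * φ j z) ∈ closure D := by
        intro z hzs
        have hznorm : ‖z‖ = r := by simpa using hzs
        have hzU : z ∈ unitDisc := by
          simp only [unitDisc, Metric.mem_ball, dist_zero_right, hznorm]; exact hr1
        have hfz : (fun j => mobius α z ^ k j * φ j z) ∈ D := hfD hzU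
        have hm : s ≤ ‖mobius α z‖ :=
          mobius_norm_lower hαn hs0.le hs1.le hr1.le hcond hznorm
        have hm0 : mobius α z ≠ 0 := by
          intro h
          rw [h, norm_zero] at hm
          linarith
        have hl1 : ‖(s:ℂ) / mobius α z‖ ≤ 1 := by
          rw [norm_div, Complex.norm_real, Real.norm_of_nonneg hs0.le]
          exact div_le_one_of_le₀ hm (norm_nonneg _)
        have hball := hbal ((s:ℂ) / mobius α z) hl1 _ hfz
        have heqf : (fun j => ((s:ℂ) / mobius α z) ^ k j *
            ((fun j => mobius α z ^ k j * φ j z) j)) = fun j => (s:ℂ)^(k j) * φ j z := by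
          funext j
          have hp : mobius α z ^ k j ≠ 0 := pow_ne_zero _ hm0
          field_simp [div_pow]
          rw [div_pow, div_mul_cancel₀ _ hp]
          ring
        rw [heqf] at hball
        exact subset_closure hball
      exact mem_of_sphere_mem hconv.closure isClosed_closure hrpos hdiff hsphere
        (by simpa [Metric.mem_closedBall, dist_zero_right] using hzr)
    have htend : Tendsto (fun s : ℝ => (fun j => (s:ℂ)^(k j) * φ j z₀)) (𝓝[<] (1:ℝ))
        (𝓝 (fun j => φ j z₀)) := by
      apply Tendsto.mono_left _ (nhdsWithin_le_nhds (s := Set.Iio (1:ℝ)))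
      rw [tendsto_pi_nhds]
      intro j
      have hc : ContinuousAt (fun s : ℝ => (s:ℂ)^(k j) * φ j z₀) 1 := by fun_prop
      simpa using hc.tendsto
    have hev : ∀ᶠ s : ℝ in 𝓝[<] (1:ℝ), (fun j => (s:ℂ)^(k j) * φ j z₀) ∈ closure D := by
      have he0 : ∀ᶠ s in 𝓝[<] (1:ℝ), (0:ℝ) < s :=
        eventually_nhdsWithin_of_eventually_nhds (eventually_gt_nhds (by norm_num : (0:ℝ) < 1))
      have he1 : ∀ᶠ s in 𝓝[<] (1:ℝ), s < 1 := eventually_mem_nhdsWithin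
      filter_upwards [he0, he1] with s hs0 hs1
      exact key s hs0 hs1
    exact isClosed_closure.mem_of_tendsto htend hev
  -- Step B: dichotomy via the maximum principle
  by_cases hall : ∀ z ∈ unitDisc, (fun j => φ j z) ∈ D
  · exact Or.inl hall
  right
  push_neg at hall
  obtain ⟨z₁, hz₁, hz₁D⟩ := hall
  obtain ⟨F, hF⟩ := geometric_hahn_banach_open_point hconv hDo hz₁D
  set c := F (fun j => φ j z₁) with hc
  have hleD : ∀ x ∈ closure D, F x ≤ c := fun x hx =>
    (closure_minimal (fun a ha => (hF a ha).le)
      (isClosed_le F.continuous continuous_const)) hx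
  let ℓ : (Fin n → ℂ) →L[ℂ] ℂ := F.extendTo𝕜'
  have hre : ∀ x, (ℓ x).re = F x := by
    intro x
    exact StrongDual.re_extendRCLike_apply (𝕜 := ℂ) F x
  set G : ℂ → ℂ := fun z => Complex.exp (ℓ (fun j => φ j z)) with hG
  have hGnorm : ∀ z, ‖G z‖ = Real.exp (F (fun j => φ j z)) := by
    intro z
    rw [hG]
    rw [Complex.norm_exp, hre]
  have hGdiff : DifferentiableOn ℂ G unitDisc := by
    apply Complex.differentiable_exp.comp_differentiableOn
    apply ℓ.differentiable.comp_differentiableOn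
    rw [differentiableOn_pi]
    exact hφ
  have hmax : IsMaxOn (norm ∘ G) unitDisc z₁ := by
    intro z hz
    simp only [Function.comp_apply, hGnorm, Set.mem_setOf_eq]
    exact Real.exp_le_exp.mpr (hleD _ (hclos z hz))
  have heq := Complex.norm_eqOn_of_isPreconnected_of_isMaxOn
    (convex_ball (0:ℂ) 1).isPreconnected Metric.isOpen_ball hGdiff hz₁ hmax
  intro z hz
  have hFz : F (fun j => φ j z) = c := by
    have h1 := heq hz
    simp only [Function.comp_apply, Function.const_apply] at h1
    rw [hGnorm] at h1
    have h2 : ‖G z₁‖ = Real.exp c := by rw [hGnorm, hc]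
    rw [h2] at h1
    exact Real.exp_injective h1
  have hnotD : (fun j => φ j z) ∉ D := fun hmem => by
    have := hF _ hmem
    rw [hFz] at this
    exact lt_irrefl _ this
  rw [hDo.frontier_eq]
  exact ⟨hclos z hz, hnotD⟩
end
end

section
/- Let k ∈ ℕ₀ⁿ \ {0} and let D ⊆ ℂⁿ be a k-balanced domain. Let λ₁,…,λ_m ∈ 𝔻 be pairwise distinct and let f : 𝔻 → D be a weak m-extremal for λ₁,…,λ_m of the form f = (m_α^{k₁}·φ₁,…,m_α^{k_n}·φ_n), where α ∈ 𝔻, φ₁,…,φ_n : 𝔻 → ℂ are holomorphic, and assume φ := (φ₁,…,φ_n) satisfies φ(𝔻) ⊆ D. Then: (i) φ is a weak m-extremal for λ₁,…,λ_m; and (ii) if m ≥ 3, λ_m = α and k_j ≥ 1 for all j, then φ is a weak (m−1)-extremal for λ₁,…,λ_{m−1}. -/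
open Complex Metric Set Filter

noncomputable section

variable {E : Type*} [NormedAddCommGroup E] [NormedSpace ℂ E]

lemma mobius_denom_ne {a z : ℂ} (ha : ‖a‖ < 1) (hz : ‖z‖ ≤ 1) :
    1 - (starRingEnd ℂ) a * z ≠ 0 := by
  intro h
  have h1 : (starRingEnd ℂ) a * z = 1 := by linear_combination -h
  have : ‖(starRingEnd ℂ) a * z‖ < 1 := by
    rw [norm_mul, RCLike.norm_conj]
    calc ‖a‖ * ‖z‖ ≤ ‖a‖ * 1 := by gcongr
    _ < 1 := by simpa using ha
  rw [h1] at this; simp at this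

lemma mobius_norm_le {a z : ℂ} (ha : ‖a‖ < 1) (hz : ‖z‖ ≤ 1) :
    ‖mobius a z‖ ≤ 1 := by
  have hne := mobius_denom_ne ha hz
  have key : normSq (1 - (starRingEnd ℂ) a * z) - normSq (z - a)
      = (1 - normSq a) * (1 - normSq z) := by
    simp only [normSq_apply, Complex.sub_re, Complex.sub_im, Complex.mul_re,
      Complex.mul_im, Complex.one_re, Complex.one_im, Complex.conj_re, Complex.conj_im]
    ring
  have hna : normSq a < 1 := by
    have h1 : normSq a = ‖a‖ ^ 2 := by rw [Complex.sq_norm]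
    nlinarith [norm_nonneg a]
  have hnz : normSq z ≤ 1 := by
    have h1 : normSq z = ‖z‖ ^ 2 := by rw [Complex.sq_norm]
    nlinarith [norm_nonneg z]
  have hle : normSq (z - a) ≤ normSq (1 - (starRingEnd ℂ) a * z) := by nlinarith
  have hb : ‖z - a‖ ≤ ‖1 - (starRingEnd ℂ) a * z‖ := by
    rw [Complex.norm_def, Complex.norm_def]
    exact Real.sqrt_le_sqrt hle
  have hpos : 0 < ‖1 - (starRingEnd ℂ) a * z‖ := norm_pos_iff.mpr hne
  rw [mobius, norm_div, div_le_one hpos]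
  exact hb

lemma mobius_self (a : ℂ) : mobius a a = 0 := by simp [mobius]

lemma push_lemma {n : ℕ} (k : Fin n → ℕ) (D : Set (Fin n → ℂ)) (hDo : IsOpen D)
    (hbal : QuasiBalanced k D) (a : ℂ) (ha : ‖a‖ < 1)
    (U : Set ℂ) (h : ℂ → Fin n → ℂ) (hU : IsOpen U)
    (hsub : Metric.closedBall (0:ℂ) 1 ⊆ U)
    (hdiff : DifferentiableOn ℂ h U) (hmaps : Set.MapsTo h U D) :
    ∃ U' : Set ℂ, IsOpen U' ∧ Metric.closedBall (0:ℂ) 1 ⊆ U' ∧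
      DifferentiableOn ℂ (fun z j => mobius a z ^ k j * h z j) U' ∧
      Set.MapsTo (fun z j => mobius a z ^ k j * h z j) U' D := by
  set g : ℂ → Fin n → ℂ := fun z j => mobius a z ^ k j * h z j with hg
  set V : Set ℂ := U ∩ {z | 1 - (starRingEnd ℂ) a * z ≠ 0} with hV
  have hVopen : IsOpen V := by
    apply hU.inter
    have : {z : ℂ | 1 - (starRingEnd ℂ) a * z ≠ 0}
        = (fun z : ℂ => 1 - (starRingEnd ℂ) a * z) ⁻¹' {0}ᶜ := by
      ext z; simp [Set.mem_preimage]
    rw [this]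
    exact IsOpen.preimage (by fun_prop) isOpen_compl_singleton
  have hmobdiff : DifferentiableOn ℂ (mobius a) V := by
    apply DifferentiableOn.div
    · fun_prop
    · fun_prop
    · exact fun z hz => hz.2
  have hdiffV : DifferentiableOn ℂ g V := by
    rw [differentiableOn_pi]
    intro j
    exact (hmobdiff.pow (k j)).mul
      ((differentiableOn_pi.mp (hdiff.mono Set.inter_subset_left)) j)
  refine ⟨V ∩ g ⁻¹' D, hdiffV.continuousOn.isOpen_inter_preimage hVopen hDo, ?_,
    hdiffV.mono Set.inter_subset_left, fun z hz => hz.2⟩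
  intro z hz
  have hzn : ‖z‖ ≤ 1 := by simpa using Metric.mem_closedBall.mp hz
  have hzU : z ∈ U := hsub hz
  refine ⟨⟨hzU, mobius_denom_ne ha hzn⟩, ?_⟩
  exact hbal (mobius a z) (mobius_norm_le ha hzn) (h z) (hmaps hzU)

/-- Let `D ⊆ ℂⁿ` be a `k`-balanced domain and let
`f = (m_α^{k₁} φ₁, …, m_α^{k_n} φ_n) : 𝔻 → D` be a weak `m`-extremal for
pairwise distinct `λ₁, …, λ_m`, with `φ(𝔻) ⊆ D`. Then (i) `φ` is a weak
`m`-extremal for `λ₁, …, λ_m`; and (ii) if `m ≥ 3`, `λ_m = α` and all `k_j ≥ 1`,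
then `φ` is a weak `(m-1)`-extremal for `λ₁, …, λ_{m-1}`. -/
theorem quotient_weak_extremal
    {n : ℕ} (k : Fin n → ℕ) (hk : k ≠ 0)
    (D : Set (Fin n → ℂ)) (hDo : IsOpen D) (hDc : IsConnected D)
    (hbal : QuasiBalanced k D)
    (m : ℕ) (hm : 2 ≤ m)
    (lam : Fin m → ℂ) (hinj : Function.Injective lam)
    (hmem : ∀ j, lam j ∈ unitDisc)
    (α : ℂ) (hα : α ∈ unitDisc)
    (φ : Fin n → ℂ → ℂ) (hφ : ∀ j, DifferentiableOn ℂ (φ j) unitDisc)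
    (f : ℂ → Fin n → ℂ) (hf : f = fun z j => mobius α z ^ k j * φ j z)
    (hfD : Set.MapsTo f unitDisc D)
    (hweak : WeakExtremalFor D f lam)
    (hφD : Set.MapsTo (fun z j => φ j z) unitDisc D) :
    WeakExtremalFor D (fun z j => φ j z) lam ∧
    (3 ≤ m → lam ⟨m - 1, by omega⟩ = α → (∀ j, 1 ≤ k j) →
      WeakExtremalFor D (fun z j => φ j z)
        (fun i : Fin (m - 1) => lam (Fin.castLE (Nat.sub_le m 1) i))) := by
  have haN : ‖α‖ < 1 := by simpa [unitDisc] using hα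
  constructor
  · rintro ⟨U, h, hU, hsub, hdiff, hmaps, hint⟩
    obtain ⟨U', hU', hsub', hdiff', hmaps'⟩ :=
      push_lemma k D hDo hbal α haN U h hU hsub hdiff hmaps
    refine hweak ⟨U', _, hU', hsub', hdiff', hmaps', fun j => ?_⟩
    funext j'
    have hv := congrFun (hint j) j'
    simp only at hv
    simp [hf, hv]
  · intro h3 hlast hk1
    rintro ⟨U, h, hU, hsub, hdiff, hmaps, hint⟩
    obtain ⟨U', hU', hsub', hdiff', hmaps'⟩ :=
      push_lemma k D hDo hbal α haN U h hU hsub hdiff hmaps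
    refine hweak ⟨U', _, hU', hsub', hdiff', hmaps', fun j => ?_⟩
    by_cases hj : (j : ℕ) < m - 1
    · funext j'
      have hcast : lam (Fin.castLE (Nat.sub_le m 1) ⟨(j : ℕ), hj⟩) = lam j := by
        congr 1
      have hv : h (lam j) j' = φ j' (lam j) := by
        have hv0 := congrFun (hint ⟨(j : ℕ), hj⟩) j'
        simp only at hv0
        rwa [hcast] at hv0
      simp [hf, hv]
    · have hjm : j = ⟨m - 1, by omega⟩ := by
        apply Fin.ext
        have := j.isLt
        simp only
        omega
      funext j'
      rw [hjm, hlast]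
      simp [hf, mobius_self, zero_pow (Nat.one_le_iff_ne_zero.mp (hk1 j'))]
end
end
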